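/- arXiv:1606.00974 — 8 statements merged into one kernel-verified Lean document; each statement's English description precedes it below -/
import Mathlib

section
/- Let F be a field whose characteristic is not 2, and let G be a simple graph on a finite nonempty vertex set V with |V| = n. Then the incidence matrix of G has rank n over F if and only if every connected component of G contains an odd cycle (equivalently, no connected component of G is bipartite/2-colorable; in particular G has no isolated vertices). -/
open Matrix SimpleGraph

section Aux

variable {V F : Type*} [Fintype V] [DecidableEq V] [Field F]

private lemma rank_eq_card_iff_ker {m n' : Type*} [Fintype m] [Fintype n']
    (A : Matrix m n' F) :
    A.rank = Fintype.card m ↔ ∀ y : m → F, Aᵀ *ᵥ y = 0 → y = 0 := by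
  rw [← Matrix.rank_transpose]
  have h1 := LinearMap.finrank_range_add_finrank_ker (Aᵀ.mulVecLin)
  rw [Module.finrank_fintype_fun_eq_card] at h1
  have hker : (∀ y : m → F, Aᵀ *ᵥ y = 0 → y = 0) ↔ LinearMap.ker Aᵀ.mulVecLin = ⊥ := by
    rw [LinearMap.ker_eq_bot']
    exact Iff.rfl
  rw [hker]
  unfold Matrix.rank
  constructor
  · intro h
    have : Module.finrank F (LinearMap.ker Aᵀ.mulVecLin) = 0 := by omega
    exact Submodule.finrank_eq_zero.mp this
  · intro h
    rw [h, finrank_bot] at h1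
    omega

open Classical in
private lemma sum_incMatrix_mul {G : SimpleGraph V} {u v : V} (h : G.Adj u v) (y : V → F) :
    ∑ w, G.incMatrix F w s(u, v) * y w = y u + y v := by
  have key : ∀ w, G.incMatrix F w s(u, v) * y w
      = (if w = u then y u else 0) + (if w = v then y v else 0) := by
    intro w
    by_cases hu : w = u
    · subst hu
      rw [G.incMatrix_of_mem_incidenceSet (G.mk'_mem_incidenceSet_left_iff.mpr h)]
      simp [h.ne]
    · by_cases hv : w = v
      · subst hv
        rw [G.incMatrix_of_mem_incidenceSet (G.mk'_mem_incidenceSet_right_iff.mpr h)]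
        simp [hu]
      · rw [G.incMatrix_of_notMem_incidenceSet]
        · simp [hu, hv]
        · rw [G.mk'_mem_incidenceSet_iff]
          tauto
  rw [Finset.sum_congr rfl fun w _ => key w, Finset.sum_add_distrib]
  simp

open Classical in
private lemma mulVec_transpose_eq_zero_iff (G : SimpleGraph V) (y : V → F) :
    (G.incMatrix F)ᵀ *ᵥ y = 0 ↔ ∀ u v, G.Adj u v → y u + y v = 0 := by
  constructor
  · intro h u v huv
    have h2 := congrFun h s(u, v)
    simp only [Matrix.mulVec, dotProduct, Matrix.transpose_apply, Pi.zero_apply] at h2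
    rwa [sum_incMatrix_mul huv y] at h2
  · intro h
    funext e
    refine e.ind (fun u v => ?_)
    by_cases huv : G.Adj u v
    · simp only [Matrix.mulVec, dotProduct, Matrix.transpose_apply, Pi.zero_apply]
      rw [sum_incMatrix_mul huv y]
      exact h u v huv
    · simp only [Matrix.mulVec, dotProduct, Matrix.transpose_apply, Pi.zero_apply]
      refine Finset.sum_eq_zero fun w _ => ?_
      rw [G.incMatrix_of_notMem_incidenceSet, zero_mul]
      rw [G.mk'_mem_incidenceSet_iff]
      tauto

private lemma fin2_cases (a b : Fin 2) (h : a ≠ b) : (a = 0 ∧ b = 1) ∨ (a = 1 ∧ b = 0) := by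
  fin_cases a <;> fin_cases b <;> simp_all

private lemma walk_sign {G : SimpleGraph V} {y : V → F}
    (hy : ∀ u v, G.Adj u v → y u + y v = 0) {u w : V} (p : G.Walk u w) :
    y w = y u ∨ y w = -y u := by
  induction p with
  | nil => left; rfl
  | @cons a b c h' p ih =>
    have hab : y b = -y a := by linear_combination hy a b h'
    rcases ih with h1 | h1
    · right; rw [h1, hab]
    · left; rw [h1, hab, neg_neg]

end Aux

open Classical in
/-- Over a field of characteristic different from 2, the incidence matrix
of a simple graph on a nonempty vertex set of size `n` has rank `n` if and only if every
connected component fails to be 2-colorable (i.e. contains an odd cycle). -/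
theorem incMatrix_rank_eq_card_iff {V F : Type*} [Fintype V] [DecidableEq V] [Nonempty V]
    [Field F] (hF : ringChar F ≠ 2) (G : SimpleGraph V) (n : ℕ) (hn : Fintype.card V = n) :
    (G.incMatrix F).rank = n ↔
      ∀ c : G.ConnectedComponent, ¬ (G.induce c.supp).Colorable 2 := by
  classical
  subst hn
  rw [rank_eq_card_iff_ker]
  constructor
  · -- full rank → no component is 2-colorable
    intro hrk c hc
    obtain ⟨co⟩ := hc
    obtain ⟨v₀, hv₀⟩ := c.exists_rep
    set y : V → F := fun v => if h : v ∈ c.supp then (if co ⟨v, h⟩ = 0 then 1 else -1) else 0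
      with hy
    have hmem : ∀ {a b : V}, G.Adj a b → a ∈ c.supp → b ∈ c.supp := by
      intro a b hab ha
      rw [ConnectedComponent.mem_supp_iff] at ha ⊢
      rw [← ha]
      exact (ConnectedComponent.sound hab.symm.reachable)
    have hker : (G.incMatrix F)ᵀ *ᵥ y = 0 := by
      rw [mulVec_transpose_eq_zero_iff]
      intro a b hab
      by_cases ha : a ∈ c.supp
      · have hb : b ∈ c.supp := hmem hab ha
        have hadj : (G.induce c.supp).Adj ⟨a, ha⟩ ⟨b, hb⟩ := by
          simpa using hab
        have hne := co.valid hadj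
        simp only [hy, dif_pos ha, dif_pos hb]
        rcases fin2_cases _ _ hne with ⟨h1, h2⟩ | ⟨h1, h2⟩ <;>
          simp [h1, h2]
      · have hb : b ∉ c.supp := fun hb => ha (hmem hab.symm hb)
        rw [ConnectedComponent.mem_supp_iff] at ha hb
        simp [hy, ha, hb]
    have := hrk y hker
    have hv : v₀ ∈ c.supp := by rwa [ConnectedComponent.mem_supp_iff]
    have h0 := congrFun this v₀
    simp only [hy, dif_pos hv, Pi.zero_apply] at h0
    split_ifs at h0
    · exact one_ne_zero h0
    · exact neg_ne_zero.mpr one_ne_zero h0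
  · -- no component 2-colorable → full rank
    intro hcol y hker
    rw [mulVec_transpose_eq_zero_iff] at hker
    by_contra hy0
    obtain ⟨v₀, hv₀⟩ := Function.ne_iff.mp hy0
    simp only [Pi.zero_apply] at hv₀
    set c := G.connectedComponentMk v₀ with hc
    have hrange : ∀ u ∈ c.supp, y u = y v₀ ∨ y u = -y v₀ := by
      intro u hu
      rw [ConnectedComponent.mem_supp_iff, hc, ConnectedComponent.eq] at hu
      obtain ⟨p⟩ := hu.symm
      exact walk_sign hker p
    have hne : y v₀ ≠ -y v₀ := by
      intro h
      exact hv₀ ((Ring.eq_self_iff_eq_zero_of_char_ne_two hF).mp h.symm)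
    refine hcol c ?_
    have C : (G.induce c.supp).Coloring Bool := by
      refine Coloring.mk (fun u => if y u.val = y v₀ then true else false) ?_
      intro a b hab hcol'
      have hadj : G.Adj a.val b.val := by simpa using hab
      have hba : y b.val = -y a.val := by linear_combination hker a.val b.val hadj
      rcases hrange a.val a.2 with h1 | h1 <;> rcases hrange b.val b.2 with h2 | h2
      · exact hne (by linear_combination hba - h1 - h2)
      · simp [h1, h2, hne, Ne.symm hne] at hcol'
      · simp [h1, h2, hne, Ne.symm hne] at hcol'
      · exact hne (by linear_combination h1 + h2 - hba)
    simpa using C.colorable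
end

section
/- Let F be a field of characteristic 2, V a finite type, G a simple graph on V, and L a subset of V. For each edge {u,v} of G let χ_{u,v} ∈ (V → F) be the vector taking value 1 at u and at v and 0 elsewhere, and for each w ∈ L let e_w ∈ (V → F) be the standard basis vector supported at w. Then the F-linear span of { χ_{u,v} : {u,v} an edge of G } ∪ { e_w : w ∈ L } is all of V → F if and only if every connected component of G contains a vertex of L, i.e., for every v ∈ V there exists w ∈ L reachable from v in G. -/
open Classical

/-- decodability over a field of characteristic 2. The vectors
`χ_{u,v}` for edges `{u,v}` of `G` together with the standard basis vectors `e_w` for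
`w ∈ L` span all of `V → F` if and only if every vertex of `V` can reach a vertex of `L`
in `G`, i.e. every connected component of `G` contains a vertex of `L`. -/
theorem span_eq_top_iff_char_two {V F : Type*} [Fintype V] [DecidableEq V] [Field F]
    [CharP F 2] (G : SimpleGraph V) (L : Set V) :
    Submodule.span F
        ({x : V → F | ∃ u v, G.Adj u v ∧ x = fun w => if w = u ∨ w = v then 1 else 0} ∪
          {x : V → F | ∃ w ∈ L, x = Pi.single w 1}) = ⊤ ↔
      ∀ v : V, ∃ w ∈ L, G.Reachable v w := by
  classical
  set S : Set (V → F) :=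
    ({x : V → F | ∃ u v, G.Adj u v ∧ x = fun w => if w = u ∨ w = v then 1 else 0} ∪
      {x : V → F | ∃ w ∈ L, x = Pi.single w 1}) with hS
  constructor
  · intro h v
    by_contra hc
    push_neg at hc
    -- linear functional summing over the component of v
    let f : (V → F) →ₗ[F] F :=
      { toFun := fun x => ∑ u ∈ Finset.univ.filter (fun u => G.Reachable v u), x u
        map_add' := by intro x y; simp [Finset.sum_add_distrib]
        map_smul' := by intro c x; simp [Finset.mul_sum]
      }
    have hsingle : ∀ w : V, f (Pi.single w 1) = if G.Reachable v w then 1 else 0 := by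
      intro w
      simp only [f, LinearMap.coe_mk, AddHom.coe_mk]
      by_cases hw : G.Reachable v w
      · rw [Finset.sum_eq_single_of_mem w (by simp [hw])]
        · simp [hw]
        · intro b _ hb; simp [Pi.single_eq_of_ne hb]
      · rw [if_neg hw]
        apply Finset.sum_eq_zero
        intro b hb
        simp only [Finset.mem_filter] at hb
        have : b ≠ w := fun e => hw (e ▸ hb.2)
        simp [Pi.single_eq_of_ne this]
    have hker : ∀ x ∈ S, f x = 0 := by
      rintro x (⟨a, b, hab, rfl⟩ | ⟨w, hw, rfl⟩)
      · have hne : a ≠ b := hab.ne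
        have hx : (fun w => if w = a ∨ w = b then (1:F) else 0)
            = Pi.single a 1 + Pi.single b 1 := by
          funext z
          by_cases hza : z = a
          · subst hza; simp [hne, Pi.single_eq_of_ne' hne]
          · by_cases hzb : z = b
            · subst hzb; simp [Pi.single_eq_of_ne hne.symm]
            · simp [hza, hzb, Pi.single_eq_of_ne hza, Pi.single_eq_of_ne hzb]
        rw [hx, map_add, hsingle, hsingle]
        have hiff : G.Reachable v a ↔ G.Reachable v b :=
          ⟨fun h => h.trans hab.reachable, fun h => h.trans hab.symm.reachable⟩
        by_cases ha : G.Reachable v a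
        · simp [ha, hiff.mp ha, CharTwo.add_self_eq_zero]
        · have hb : ¬G.Reachable v b := fun h => ha (hiff.mpr h)
          simp [ha, hb]
      · rw [hsingle]
        have : ¬ G.Reachable v w := fun h => hc w hw h
        simp [this]
    have hle : Submodule.span F S ≤ LinearMap.ker f := by
      rw [Submodule.span_le]; intro x hx; exact hker x hx
    rw [h] at hle
    have : f (Pi.single v 1) = 0 := hle Submodule.mem_top
    rw [hsingle, if_pos (SimpleGraph.Reachable.refl v)] at this
    exact one_ne_zero this
  · intro h
    have key : ∀ v w : V, G.Reachable v w → Pi.single w (1:F) ∈ Submodule.span F S →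
        Pi.single v (1:F) ∈ Submodule.span F S := by
      intro v w hvw
      obtain ⟨p⟩ := hvw
      induction p with
      | nil => exact fun h => h
      | cons hadj p ih =>
        rename_i a b c
        intro hw
        have hb : Pi.single b (1:F) ∈ Submodule.span F S := ih hw
        have hchi : (fun z => if z = a ∨ z = b then (1:F) else 0) ∈ Submodule.span F S :=
          Submodule.subset_span (Or.inl ⟨a, b, hadj, rfl⟩)
        have heq : Pi.single a (1:F)
            = (fun z => if z = a ∨ z = b then (1:F) else 0) + Pi.single b 1 := by
          funext z
          have hne : a ≠ b := hadj.ne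
          by_cases hza : z = a
          · subst hza; simp [hne, Pi.single_eq_of_ne' hne]
          · by_cases hzb : z = b
            · subst hzb; simp [hza, Pi.single_eq_of_ne hne.symm,
                CharTwo.add_self_eq_zero]
            · simp [hza, hzb, Pi.single_eq_of_ne hza, Pi.single_eq_of_ne hzb]
        rw [heq]
        exact Submodule.add_mem _ hchi hb
    rw [eq_top_iff]
    intro x _
    have hx : x = ∑ v : V, x v • (Pi.single v 1 : V → F) := by
      funext z; simp [Finset.sum_apply, Pi.single_apply]
    rw [hx]
    refine Submodule.sum_mem _ fun v _ => Submodule.smul_mem _ _ ?_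
    obtain ⟨w, hwL, hvw⟩ := h v
    exact key v w hvw (Submodule.subset_span (Or.inr ⟨w, hwL, rfl⟩))
end

section
/- Let F be a field whose characteristic is not 2, V a finite type, G a simple graph on V, and L a subset of V. For each edge {u,v} of G let χ_{u,v} ∈ (V → F) be the vector taking value 1 at u and at v and 0 elsewhere, and for each w ∈ L let e_w ∈ (V → F) be the standard basis vector supported at w. Then the F-linear span of { χ_{u,v} : {u,v} an edge of G } ∪ { e_w : w ∈ L } is all of V → F if and only if every connected component of G either contains a vertex of L or contains an odd cycle (i.e., is not bipartite/2-colorable). -/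
open SimpleGraph Finset

section Aux

variable {V F : Type*} [Fintype V] [DecidableEq V] [Field F]

lemma edgeVec_eq (u v : V) (huv : u ≠ v) :
    (fun w => if w = u ∨ w = v then (1:F) else 0) = Pi.single u 1 + Pi.single v 1 := by
  funext w
  by_cases h1 : w = u <;> by_cases h2 : w = v <;>
    simp_all [Pi.single_apply]

lemma walk_mem_span (G : SimpleGraph V) (S : Set (V → F))
    (hS : ∀ u v, G.Adj u v → (Pi.single u 1 + Pi.single v 1 : V → F) ∈ Submodule.span F S) :
    ∀ {u v : V} (p : G.Walk u v),
      ((Pi.single u 1 : V → F) - ((-1 : F) ^ p.length) • (Pi.single v 1 : V → F))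
        ∈ Submodule.span F S := by
  intro u v p
  induction p with
  | nil => simp
  | cons h q ih =>
    have A := hS _ _ h
    have B := sub_mem A ih
    convert B using 1
    simp only [SimpleGraph.Walk.length_cons, pow_succ]
    module

lemma single_mem_of_walk (G : SimpleGraph V) (S : Set (V → F))
    (hS : ∀ u v, G.Adj u v → (Pi.single u 1 + Pi.single v 1 : V → F) ∈ Submodule.span F S)
    {u v : V} (p : G.Walk u v) (hv : (Pi.single v 1 : V → F) ∈ Submodule.span F S) :
    (Pi.single u 1 : V → F) ∈ Submodule.span F S := by
  have h1 := walk_mem_span G S hS p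
  have h2 := Submodule.smul_mem _ ((-1 : F) ^ p.length) hv
  have := add_mem h1 h2
  simpa using this

lemma colorable_of_no_odd (G : SimpleGraph V) (c : G.ConnectedComponent)
    (h : ∀ u ∈ c.supp, ∀ p : G.Walk u u, ¬ Odd p.length) :
    (G.induce c.supp).Colorable 2 := by
  classical
  obtain ⟨r, hr⟩ := c.exists_rep
  have hrs : r ∈ c.supp := by rw [ConnectedComponent.mem_supp_iff]; exact hr
  refine ⟨SimpleGraph.Coloring.mk
    (fun v => if ∃ p : G.Walk r v.1, Even p.length then 0 else 1) ?_⟩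
  rintro ⟨a, ha⟩ ⟨b, hb⟩ hab heq
  have hadj : G.Adj a b := hab
  have hra : G.Reachable r a := by
    rw [ConnectedComponent.mem_supp_iff] at ha
    exact ConnectedComponent.exact (hr.trans ha.symm)
  have hrb : G.Reachable r b := by
    rw [ConnectedComponent.mem_supp_iff] at hb
    exact ConnectedComponent.exact (hr.trans hb.symm)
  simp only at heq
  split_ifs at heq with h1 h2 h2
  · obtain ⟨p, hp⟩ := h1
    obtain ⟨q, hq⟩ := h2
    refine h r hrs (p.append (SimpleGraph.Walk.cons hadj q.reverse)) ?_
    obtain ⟨m, hm⟩ := hp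
    obtain ⟨n, hn⟩ := hq
    simp only [SimpleGraph.Walk.length_append, SimpleGraph.Walk.length_cons,
      SimpleGraph.Walk.length_reverse]
    exact ⟨m + n, by omega⟩
  · exact absurd heq (by decide)
  · exact absurd heq (by decide)
  · obtain ⟨p⟩ := hra
    obtain ⟨q⟩ := hrb
    have hp : Odd p.length := Nat.not_even_iff_odd.mp (fun he => h1 ⟨p, he⟩)
    have hq : Odd q.length := Nat.not_even_iff_odd.mp (fun he => h2 ⟨q, he⟩)
    refine h r hrs (p.append (SimpleGraph.Walk.cons hadj q.reverse)) ?_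
    obtain ⟨m, hm⟩ := hp
    obtain ⟨n, hn⟩ := hq
    simp only [SimpleGraph.Walk.length_append, SimpleGraph.Walk.length_cons,
      SimpleGraph.Walk.length_reverse]
    exact ⟨m + n + 1, by omega⟩

end Aux

/-- decodability over a field of characteristic different from 2. The
vectors `χ_{u,v}` for edges `{u,v}` of `G` together with the standard basis vectors `e_w`
for `w ∈ L` span all of `V → F` if and only if every connected component of `G` either
contains a vertex of `L` or contains an odd cycle (i.e. is not 2-colorable). -/
theorem span_eq_top_iff_char_ne_two {V F : Type*} [Fintype V] [DecidableEq V] [Field F]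
    (hF : ringChar F ≠ 2) (G : SimpleGraph V) (L : Set V) :
    Submodule.span F
        ({x : V → F | ∃ u v, G.Adj u v ∧ x = fun w => if w = u ∨ w = v then 1 else 0} ∪
          {x : V → F | ∃ w ∈ L, x = Pi.single w 1}) = ⊤ ↔
      ∀ c : G.ConnectedComponent,
        (∃ w ∈ L, w ∈ c.supp) ∨ ¬ (G.induce c.supp).Colorable 2 := by
  classical
  set S : Set (V → F) :=
    ({x : V → F | ∃ u v, G.Adj u v ∧ x = fun w => if w = u ∨ w = v then 1 else 0} ∪
      {x : V → F | ∃ w ∈ L, x = Pi.single w 1}) with hSdef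
  have hedge : ∀ u v, G.Adj u v →
      (Pi.single u 1 + Pi.single v 1 : V → F) ∈ Submodule.span F S := by
    intro u v huv
    rw [← edgeVec_eq u v huv.ne]
    exact Submodule.subset_span (Or.inl ⟨u, v, huv, rfl⟩)
  constructor
  · -- forward
    intro hspan c
    by_contra hcon
    push_neg at hcon
    obtain ⟨hL, hcol⟩ := hcon
    obtain ⟨C⟩ := hcol
    set g : V → F := fun v =>
      if h : v ∈ c.supp then (if C ⟨v, h⟩ = 0 then 1 else -1) else 0 with hg
    set φ : (V → F) →ₗ[F] F :=
      ∑ v : V, g v • (LinearMap.proj v : (V → F) →ₗ[F] F) with hφ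
    have φsingle : ∀ w : V, φ (Pi.single w 1) = g w := by
      intro w
      simp [hφ, LinearMap.sum_apply, Pi.single_apply, mul_ite]
    have hSker : S ⊆ (LinearMap.ker φ : Set (V → F)) := by
      rintro x (⟨u, v, huv, rfl⟩ | ⟨w, hwL, rfl⟩)
      · have : ((fun w => if w = u ∨ w = v then (1:F) else 0) : V → F)
            = Pi.single u 1 + Pi.single v 1 := edgeVec_eq u v huv.ne
        rw [SetLike.mem_coe, LinearMap.mem_ker, this, map_add, φsingle, φsingle]
        by_cases hu : u ∈ c.supp
        · have hv : v ∈ c.supp := by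
            rw [ConnectedComponent.mem_supp_iff] at hu ⊢
            rw [← hu]
            exact ConnectedComponent.sound huv.symm.reachable
          have hvalid : C ⟨u, hu⟩ ≠ C ⟨v, hv⟩ :=
            C.valid (by exact huv : (G.induce c.supp).Adj ⟨u, hu⟩ ⟨v, hv⟩)
          have htwo : ∀ z : Fin 2, z = 0 ∨ z = 1 := by decide
          simp only [hg]
          rw [dif_pos hu, dif_pos hv]
          rcases htwo (C ⟨u, hu⟩) with h1 | h1 <;> rcases htwo (C ⟨v, hv⟩) with h2 | h2
          · exact absurd (h1.trans h2.symm) hvalid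
          · rw [if_pos h1, if_neg (by rw [h2]; decide)]; ring
          · rw [if_neg (by rw [h1]; decide), if_pos h2]; ring
          · exact absurd (h1.trans h2.symm) hvalid
        · have hv : v ∉ c.supp := by
            intro hv
            apply hu
            rw [ConnectedComponent.mem_supp_iff] at hv ⊢
            rw [← hv]
            exact ConnectedComponent.sound huv.reachable
          simp only [hg]; rw [dif_neg hu, dif_neg hv]; ring
      · rw [SetLike.mem_coe, LinearMap.mem_ker, φsingle]
        exact dif_neg (hL w hwL)
    have hle : Submodule.span F S ≤ LinearMap.ker φ := Submodule.span_le.mpr hSker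
    rw [hspan, top_le_iff] at hle
    obtain ⟨r, hr⟩ := c.exists_rep
    have hrs : r ∈ c.supp := by rw [ConnectedComponent.mem_supp_iff]; exact hr
    have : φ (Pi.single r 1) = 0 := by
      have hm : Pi.single r 1 ∈ LinearMap.ker φ := hle ▸ Submodule.mem_top
      rwa [LinearMap.mem_ker] at hm
    rw [φsingle] at this
    simp only [hg, dif_pos hrs] at this
    split_ifs at this
    · exact one_ne_zero this
    · exact one_ne_zero (neg_eq_zero.mp this)
  · -- reverse
    intro h
    rw [eq_top_iff, ← (Pi.basisFun F V).span_eq, Submodule.span_le]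
    rintro _ ⟨i, rfl⟩
    rw [Pi.basisFun_apply]
    change (Pi.single i 1 : V → F) ∈ Submodule.span F S
    set c := G.connectedComponentMk i with hc
    rcases h c with ⟨w, hwL, hwc⟩ | hncol
    · have hw : (Pi.single w 1 : V → F) ∈ Submodule.span F S :=
        Submodule.subset_span (Or.inr ⟨w, hwL, rfl⟩)
      rw [ConnectedComponent.mem_supp_iff] at hwc
      obtain ⟨p⟩ : G.Reachable i w := (ConnectedComponent.exact (hwc.trans hc)).symm
      exact single_mem_of_walk G S hedge p hw
    · have : ∃ u ∈ c.supp, ∃ p : G.Walk u u, Odd p.length := by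
        by_contra hno
        push_neg at hno
        exact hncol (colorable_of_no_odd G c fun u hu p hp => hno u hu p hp)
      obtain ⟨u, hu, p, hp⟩ := this
      have h2 : (2 : F) ≠ 0 := Ring.two_ne_zero hF
      have hmem := walk_mem_span G S hedge p
      rw [hp.neg_one_pow] at hmem
      have : ((2 : F) • (Pi.single u 1 : V → F)) ∈ Submodule.span F S := by
        convert hmem using 1
        module
      have hu1 : (Pi.single u 1 : V → F) ∈ Submodule.span F S := by
        have := Submodule.smul_mem _ (2 : F)⁻¹ this
        rwa [inv_smul_smul₀ h2] at this
      rw [ConnectedComponent.mem_supp_iff] at hu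
      obtain ⟨q⟩ : G.Reachable i u := (ConnectedComponent.exact (hu.trans hc)).symm
      exact single_mem_of_walk G S hedge q hu1
end

section
/- Let G be a connected simple graph on a finite vertex set with n ≥ 1 vertices, and let A be its adjacency matrix over the natural numbers. Then G contains an odd cycle (equivalently, G is not bipartite/2-colorable) if and only if there exists an odd integer ℓ with 1 ≤ ℓ ≤ n such that the trace of A^ℓ is strictly positive. -/
open SimpleGraph

/-- From any closed walk of odd length we can extract a closed walk of odd length,
no longer, whose support tail has no duplicates (hence length ≤ card V). -/
lemma exists_odd_loop_nodup {V : Type*} [DecidableEq V] {G : SimpleGraph V} :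
    ∀ ℓ : ℕ, ∀ u : V, ∀ w : G.Walk u u, w.length = ℓ → Odd ℓ →
      ∃ (v : V) (c : G.Walk v v), Odd c.length ∧ c.length ≤ ℓ ∧ c.support.tail.Nodup := by
  intro ℓ
  induction ℓ using Nat.strong_induction_on with
  | _ ℓ ih =>
  intro u w hw hodd
  by_cases hnd : w.support.tail.Nodup
  · exact ⟨u, w, hw ▸ hodd, hw.le, hnd⟩
  cases w with
  | nil =>
      simp only [SimpleGraph.Walk.length_nil] at hw
      rw [← hw] at hodd
      exact absurd hodd (by simp)
  | @cons _ v' _ h r =>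
      -- h : G.Adj u v', r : G.Walk v' u
      simp only [SimpleGraph.Walk.support_cons, List.tail_cons] at hnd
      rw [List.nodup_iff_count_le_one] at hnd
      push_neg at hnd
      obtain ⟨x, hx2⟩ := hnd
      have hx1 : x ∈ r.support := by
        rw [← List.count_pos_iff]; omega
      set r1 := r.takeUntil x hx1 with hr1
      set r2 := r.dropUntil x hx1 with hr2
      have hspec : r1.append r2 = r := r.take_spec hx1
      have hlenr : r1.length + r2.length = r.length := by
        rw [← hspec, SimpleGraph.Walk.length_append]
      have hsupr : r.support = r1.support ++ r2.support.tail := by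
        rw [← hspec, SimpleGraph.Walk.support_append]
      have hcount1 : r1.support.count x = 1 := r.count_support_takeUntil_eq_one hx1
      have hcount2 : 1 ≤ r2.support.tail.count x := by
        have := hsupr ▸ hx2
        rw [List.count_append, hcount1] at this
        omega
      have hcountr2 : 2 ≤ r2.support.count x := by
        rw [SimpleGraph.Walk.support_eq_cons r2, List.count_cons_self]
        omega
      set s := r2.reverse with hs
      have hxe : x ∈ s.support := SimpleGraph.Walk.end_mem_support s
      set s1 := s.takeUntil x hxe with hs1
      set s2 := s.dropUntil x hxe with hs2
      have hspec2 : s1.append s2 = s := s.take_spec hxe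
      have hlens : s1.length + s2.length = s.length := by
        rw [← hspec2, SimpleGraph.Walk.length_append]
      have hsups : s.support = s1.support ++ s2.support.tail := by
        rw [← hspec2, SimpleGraph.Walk.support_append]
      have hcounts1 : s1.support.count x = 1 := s.count_support_takeUntil_eq_one hxe
      have hcounts : 2 ≤ s.support.count x := by
        rw [hs, SimpleGraph.Walk.support_reverse, List.count_reverse]
        exact hcountr2
      have hs2pos : 1 ≤ s2.length := by
        by_contra hcon
        have hlen0 : s2.length = 0 := by omega
        have htail : s2.support.tail = [] := by
          have : s2.support.tail.length = 0 := by
            have := SimpleGraph.Walk.length_support s2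
            simp [List.length_tail, this, hlen0]
          exact List.eq_nil_of_length_eq_zero this
        rw [hsups, List.count_append, hcounts1, htail] at hcounts
        simp at hcounts
      -- the two loops
      set cOuter : G.Walk u u := SimpleGraph.Walk.cons h (r1.append s1.reverse) with hco
      set cInner : G.Walk x x := s2.reverse with hci
      have hlouter : cOuter.length = r1.length + s1.length + 1 := by
        simp [hco, SimpleGraph.Walk.length_cons, SimpleGraph.Walk.length_append,
          SimpleGraph.Walk.length_reverse]
      have hlinner : cInner.length = s2.length := by
        simp [hci, SimpleGraph.Walk.length_reverse]
      have hslen : s.length = r2.length := by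
        simp [hs, SimpleGraph.Walk.length_reverse]
      have hwlen : r.length + 1 = ℓ := by
        simpa [SimpleGraph.Walk.length_cons] using hw
      have hsum : cOuter.length + cInner.length = ℓ := by omega
      have hoddℓ : ℓ % 2 = 1 := Nat.odd_iff.mp hodd
      rcases Nat.even_or_odd cOuter.length with hpar | hpar
      · -- inner loop is odd
        have hio : Odd cInner.length := by
          rw [Nat.odd_iff]
          have := Nat.even_iff.mp hpar
          omega
        have hlt : cInner.length < ℓ := by omega
        obtain ⟨v, c, hc1, hc2, hc3⟩ := ih cInner.length hlt x cInner rfl hio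
        exact ⟨v, c, hc1, hc2.trans hlt.le, hc3⟩
      · have hlt : cOuter.length < ℓ := by omega
        obtain ⟨v, c, hc1, hc2, hc3⟩ := ih cOuter.length hlt u cOuter rfl hpar
        exact ⟨v, c, hc1, hc2.trans hlt.le, hc3⟩

/-- A connected simple graph on `n ≥ 1` vertices contains an odd cycle
(equivalently, is not 2-colorable) if and only if the trace of some odd power `A^ℓ`,
`1 ≤ ℓ ≤ n`, of its adjacency matrix over `ℕ` is strictly positive. -/
theorem not_colorable_two_iff_trace_pos {V : Type*} [Fintype V] [DecidableEq V]
    (G : SimpleGraph V) [DecidableRel G.Adj] (n : ℕ) (hn : Fintype.card V = n)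
    (hn1 : 1 ≤ n) (hconn : G.Connected) :
    ¬ G.Colorable 2 ↔
      ∃ ℓ : ℕ, Odd ℓ ∧ 1 ≤ ℓ ∧ ℓ ≤ n ∧ 0 < Matrix.trace ((G.adjMatrix ℕ) ^ ℓ) := by
  constructor
  · intro hncol
    -- get a root
    have hne : Nonempty V := by
      rw [← Fintype.card_pos_iff]; omega
    obtain ⟨r⟩ := hne
    -- find an edge whose endpoints have distances of equal parity to r
    have hedge : ∃ a b : V, G.Adj a b ∧ G.dist r a % 2 = G.dist r b % 2 := by
      by_contra hno
      push_neg at hno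
      apply hncol
      have col : G.Coloring (ZMod 2) := SimpleGraph.Coloring.mk
        (fun v => (G.dist r v : ZMod 2)) (by
          intro a b hadj heq
          rw [ZMod.natCast_eq_natCast_iff] at heq
          exact hno a b hadj heq)
      have := col.colorable
      simpa using this
    obtain ⟨a, b, hadj, hpar⟩ := hedge
    obtain ⟨p1, hp1⟩ := (hconn r a).exists_walk_length_eq_dist
    obtain ⟨p2, hp2⟩ := (hconn r b).exists_walk_length_eq_dist
    set w : G.Walk r r := p1.append (SimpleGraph.Walk.cons hadj p2.reverse) with hwdef
    have hwlen : w.length = G.dist r a + (G.dist r b + 1) := by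
      simp [hwdef, SimpleGraph.Walk.length_append, SimpleGraph.Walk.length_cons,
        SimpleGraph.Walk.length_reverse, hp1, hp2]
    have hwodd : Odd w.length := by
      rw [Nat.odd_iff, hwlen]; omega
    obtain ⟨v, c, hc1, _, hc3⟩ := exists_odd_loop_nodup w.length r w rfl hwodd
    refine ⟨c.length, hc1, hc1.pos, ?_, ?_⟩
    · have h1 : c.support.tail.length ≤ Fintype.card V := hc3.length_le_card
      have h2 : c.support.length = c.length + 1 := SimpleGraph.Walk.length_support c
      have h3 : c.support.tail.length = c.length := by
        simp [List.length_tail, h2]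
      omega
    · rw [Matrix.trace]
      apply Finset.sum_pos' (fun i _ => Nat.zero_le _)
      refine ⟨v, Finset.mem_univ v, ?_⟩
      rw [Matrix.diag_apply, SimpleGraph.adjMatrix_pow_apply_eq_card_walk,
        Nat.cast_id, Fintype.card_pos_iff]
      exact ⟨⟨c, rfl⟩⟩
  · rintro ⟨ℓ, hodd, _, _, htr⟩ hcol
    rw [Matrix.trace] at htr
    obtain ⟨v, _, hv⟩ := Finset.exists_ne_zero_of_sum_ne_zero htr.ne'
    rw [Matrix.diag_apply, SimpleGraph.adjMatrix_pow_apply_eq_card_walk,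
      Nat.cast_id] at hv
    obtain ⟨⟨p, hp⟩⟩ := Fintype.card_pos_iff.mp (Nat.pos_of_ne_zero hv)
    have h3 := SimpleGraph.Walk.three_le_chromaticNumber_of_odd_loop p (hp ▸ hodd)
    have h2 := hcol.chromaticNumber_le
    have : (3 : ℕ∞) ≤ 2 := h3.trans h2
    norm_num at this
end

section
/- Let G be a simple graph on a finite nonempty vertex set V with edge set E, and suppose G is decodable (q odd sense). Then (i) b_G ≤ δ(G), the minimum degree of G, and (ii) b_G ≤ |E| − Γ(G), where Γ(G) is the maximum cut size of G. -/
/-- Decodability (over `GF(q)` with `q` odd) of a simple graph: every connected component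
contains an odd cycle, i.e. no connected component is 2-colorable. -/
def OddDecodable {V : Type*} (H : SimpleGraph V) : Prop :=
  ∀ c : H.ConnectedComponent, ¬ (H.induce c.supp).Colorable 2

/-- `uG G x` is the number of `x`-element subsets `D` of the edge set of `G` such that the
spanning subgraph `G − D` is not decodable (`q` odd sense). -/
noncomputable def uG {V : Type*} (G : SimpleGraph V) (x : ℕ) : ℕ :=
  Nat.card {D : Finset (Sym2 V) //
    ↑D ⊆ G.edgeSet ∧ D.card = x ∧ ¬ OddDecodable (G.deleteEdges ↑D)}

/-- `bCut G` is the least cardinality of a set `D` of edges of `G` such that `G − D` is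
not decodable (`q` odd sense). -/
noncomputable def bCut {V : Type*} (G : SimpleGraph V) : ℕ :=
  sInf {x : ℕ | 0 < uG G x}

/-- `cutSize G U` is the number of edges of `G` with exactly one endpoint in `U`. -/
noncomputable def cutSize {V : Type*} (G : SimpleGraph V) (U : Set V) : ℕ :=
  Nat.card {e : Sym2 V // e ∈ G.edgeSet ∧ ∃ a b, e = s(a, b) ∧ a ∈ U ∧ b ∉ U}

/-- `maxCut G` is the maximum cut size of `G`. -/
noncomputable def maxCut {V : Type*} (G : SimpleGraph V) : ℕ :=
  sSup {c : ℕ | ∃ U : Set V, c = cutSize G U}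

private lemma bCut_le_of_aux {V : Type*} [Finite V] (G : SimpleGraph V) (D : Finset (Sym2 V))
    (hD : ↑D ⊆ G.edgeSet) (h : ¬ OddDecodable (G.deleteEdges ↑D)) : bCut G ≤ D.card := by
  have : Fintype V := Fintype.ofFinite V
  classical
  apply Nat.sInf_le
  have hne : Nonempty {D' : Finset (Sym2 V) //
      ↑D' ⊆ G.edgeSet ∧ D'.card = D.card ∧ ¬ OddDecodable (G.deleteEdges ↑D')} :=
    ⟨⟨D, hD, rfl, h⟩⟩
  show D.card ∈ {x : ℕ | 0 < uG G x}
  simp only [Set.mem_setOf_eq, uG]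
  exact Nat.card_pos

/-- If a graph `H` is 2-colorable, then it is not odd-decodable (any component gives a
2-colorable induced subgraph, and there is a component since `V` is nonempty). -/
private lemma not_oddDecodable_of_colorable {V : Type*} [Nonempty V] (H : SimpleGraph V)
    (h : H.Colorable 2) : ¬ OddDecodable H := by
  intro hOD
  exact hOD (H.connectedComponentMk (Classical.arbitrary V))
    ⟨h.some.comp (SimpleGraph.Embedding.induce _).toHom⟩

/-- For a decodable (`q` odd sense) simple graph `G` on a finite nonempty
vertex set: (i) `b_G ≤ δ(G)`, the minimum degree, and (ii) `b_G ≤ |E| − Γ(G)`, where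
`Γ(G)` is the maximum cut size. -/
theorem bCut_le_minDegree_and_le_card_sub_maxCut {V : Type*} [Fintype V] [Nonempty V]
    (G : SimpleGraph V) [DecidableRel G.Adj] (hdec : OddDecodable G) :
    bCut G ≤ G.minDegree ∧ bCut G ≤ Nat.card G.edgeSet - maxCut G := by
  classical
  constructor
  · -- (i) delete all edges at a minimum-degree vertex
    obtain ⟨v, hv⟩ := G.exists_minimal_degree_vertex
    have hsub : ↑(G.incidenceFinset v) ⊆ G.edgeSet := by
      intro e he
      rw [Finset.mem_coe, SimpleGraph.mem_incidenceFinset] at he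
      exact G.incidenceSet_subset v he
    set H := G.deleteEdges (↑(G.incidenceFinset v) : Set (Sym2 V)) with hH
    have hiso : ∀ u, ¬ H.Adj v u := by
      intro u hadj
      rw [hH, SimpleGraph.deleteEdges_adj] at hadj
      exact hadj.2 (by
        rw [Finset.mem_coe, SimpleGraph.mem_incidenceFinset,
          SimpleGraph.mk'_mem_incidenceSet_iff]
        exact ⟨hadj.1, Or.inl rfl⟩)
    have hsupp : ∀ w, w ∈ (H.connectedComponentMk v).supp → w = v := by
      intro w hw
      rw [SimpleGraph.ConnectedComponent.mem_supp_iff,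
        SimpleGraph.ConnectedComponent.eq] at hw
      obtain ⟨p⟩ := hw.symm
      cases p with
      | nil => rfl
      | cons h _ => exact absurd h (hiso _)
    have hnd : ¬ OddDecodable H := by
      intro hOD
      refine hOD (H.connectedComponentMk v) ⟨SimpleGraph.Coloring.mk (fun _ => 0) ?_⟩
      rintro ⟨a, ha⟩ ⟨b, hb⟩ hab
      exfalso
      have ha' := hsupp a ha
      have hb' := hsupp b hb
      subst ha'
      subst hb'
      exact H.irrefl hab
    have := bCut_le_of_aux G (G.incidenceFinset v) hsub hnd
    rwa [G.card_incidenceFinset_eq_degree, ← hv] at this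
  · -- (ii) delete all non-cut edges of a maximum cut
    set S := {c : ℕ | ∃ U : Set V, c = cutSize G U} with hS
    have hbdd : BddAbove S := by
      refine ⟨Nat.card G.edgeSet, ?_⟩
      rintro c ⟨U, rfl⟩
      exact Nat.card_le_card_of_injective
        (fun e => (⟨e.1, e.2.1⟩ : G.edgeSet))
        (by intro a b hab
            exact Subtype.ext (congrArg (fun x : G.edgeSet => x.val) hab))
    have hsne : S.Nonempty := ⟨_, ∅, rfl⟩
    obtain ⟨U, hU⟩ : maxCut G ∈ S := Nat.sSup_mem hsne hbdd
    set P : Sym2 V → Prop := fun e => ∃ a b, e = s(a, b) ∧ a ∈ U ∧ b ∉ U with hP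
    set D : Finset (Sym2 V) := G.edgeFinset.filter (fun e => ¬ P e) with hD
    have hsub : ↑D ⊆ G.edgeSet := by
      intro e he
      rw [hD, Finset.coe_filter] at he
      exact (SimpleGraph.mem_edgeFinset).1 he.1
    have hcut : cutSize G U = (G.edgeFinset.filter P).card := by
      rw [cutSize, Nat.card_eq_fintype_card, Fintype.card_subtype]
      congr 1
      ext e
      simp [SimpleGraph.mem_edgeFinset, hP]
    have hEcard : Nat.card G.edgeSet = G.edgeFinset.card := by
      rw [Nat.card_eq_fintype_card, SimpleGraph.edgeFinset, Set.toFinset_card]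
    -- the graph after deleting the non-cut edges is bipartite
    have hcol : (G.deleteEdges ↑D).Colorable 2 := by
      refine ⟨SimpleGraph.Coloring.mk (fun w => if w ∈ U then (0 : Fin 2) else 1) ?_⟩
      intro a b hab
      rw [SimpleGraph.deleteEdges_adj] at hab
      have hPe : P s(a, b) := by
        by_contra hnp
        exact hab.2 (by
          rw [hD, Finset.mem_coe, Finset.mem_filter]
          exact ⟨SimpleGraph.mem_edgeFinset.2 hab.1, hnp⟩)
      obtain ⟨x, y, hxy, hxU, hyU⟩ := hPe
      rcases Sym2.eq_iff.1 hxy with ⟨rfl, rfl⟩ | ⟨rfl, rfl⟩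
      · simp [hxU, hyU]
      · simp [hxU, hyU]
    have hnd : ¬ OddDecodable (G.deleteEdges ↑D) :=
      not_oddDecodable_of_colorable _ hcol
    have hle := bCut_le_of_aux G D hsub hnd
    have hsum : (G.edgeFinset.filter P).card + D.card = G.edgeFinset.card := by
      rw [hD]
      exact Finset.card_filter_add_card_filter_not P
    rw [hEcard, hU, hcut]
    omega
end

section
/- Let G be a simple graph with n vertices and m edges, and let Γ(G) denote its maximum cut size. Then (1) Γ(G) ≥ m/2 + (√(8m+1) − 1)/8, and (2) if G is connected, Γ(G) ≥ m/2 + (n−1)/4 (both inequalities over the reals). -/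
open Finset
open scoped Classical


namespace EdwardsProof

variable {V : Type*}

def Cross (U : Set V) (e : Sym2 V) : Prop := ∃ a b, e = s(a, b) ∧ a ∈ U ∧ b ∉ U

def Touch (W : Set V) (e : Sym2 V) : Prop := ∃ x ∈ e, x ∈ W

lemma cross_mk {U : Set V} {x y : V} :
    Cross U s(x, y) ↔ (x ∈ U ∧ y ∉ U) ∨ (y ∈ U ∧ x ∉ U) := by
  constructor
  · rintro ⟨a, b, he, ha, hb⟩
    rcases Sym2.eq_iff.mp he.symm with ⟨rfl, rfl⟩ | ⟨rfl, rfl⟩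
    · exact Or.inl ⟨ha, hb⟩
    · exact Or.inr ⟨ha, hb⟩
  · rintro (⟨hx, hy⟩ | ⟨hy, hx⟩)
    · exact ⟨x, y, rfl, hx, hy⟩
    · exact ⟨y, x, Sym2.eq_swap, hy, hx⟩

lemma cross_mk_left {U : Set V} {u w : V} (hu : u ∉ U) : Cross U s(u, w) ↔ w ∈ U := by
  rw [cross_mk]; tauto

lemma cross_mk_right {U : Set V} {u w : V} (hu : u ∈ U) : Cross U s(u, w) ↔ w ∉ U := by
  rw [cross_mk]; tauto

lemma cross_congr {U U' : Set V} {e : Sym2 V} (h : ∀ x ∈ e, (x ∈ U ↔ x ∈ U')) :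
    Cross U e ↔ Cross U' e := by
  induction e with
  | _ x y =>
    have hx := h x (Sym2.mem_mk_left x y)
    have hy := h y (Sym2.mem_mk_right x y)
    rw [cross_mk, cross_mk]; tauto

/-- the graph with all edges meeting `W` removed -/
def avoid (G : SimpleGraph V) (W : Set V) : SimpleGraph V where
  Adj a b := G.Adj a b ∧ a ∉ W ∧ b ∉ W
  symm := ⟨by rintro a b ⟨h, ha, hb⟩; exact ⟨h.symm, hb, ha⟩⟩
  loopless := ⟨by rintro a ⟨h, _, _⟩; exact G.irrefl h⟩

lemma mem_avoid_edgeSet {G : SimpleGraph V} {W : Set V} {e : Sym2 V} :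
    e ∈ (avoid G W).edgeSet ↔ e ∈ G.edgeSet ∧ ¬ Touch W e := by
  induction e with
  | _ x y =>
    simp only [SimpleGraph.mem_edgeSet, Touch, Sym2.mem_iff]
    constructor
    · rintro ⟨h, hx, hy⟩
      push_neg
      exact ⟨h, by rintro z (rfl | rfl) <;> assumption⟩
    · rintro ⟨h, hall⟩
      push_neg at hall
      exact ⟨h, hall x (Or.inl rfl), hall y (Or.inr rfl)⟩

section fin
variable [Fintype V] (G : SimpleGraph V)

noncomputable def esize : ℕ := #G.edgeFinset

noncomputable def cutF (U : Set V) : ℕ := #(G.edgeFinset.filter (fun e => Cross U e))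

noncomputable def rsize (W : Set V) : ℕ := #(G.edgeFinset.filter (fun e => Touch W e))

noncomputable def rcut (W U : Set V) : ℕ :=
  #((G.edgeFinset.filter (fun e => Touch W e)).filter (fun e => Cross U e))

lemma cutF_le (U : Set V) : cutF G U ≤ esize G := Finset.card_filter_le _ _

lemma avoid_edgeFinset (W : Set V) :
    (avoid G W).edgeFinset = G.edgeFinset.filter (fun e => ¬ Touch W e) := by
  ext e
  simp only [SimpleGraph.mem_edgeFinset, Finset.mem_filter, mem_avoid_edgeSet]

lemma esize_split (W : Set V) : esize G = esize (avoid G W) + rsize G W := by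
  unfold esize rsize
  rw [avoid_edgeFinset, add_comm]
  exact (Finset.card_filter_add_card_filter_not (fun e => Touch W e)).symm

lemma cutF_split (W U : Set V) : cutF G U = cutF (avoid G W) U + rcut G W U := by
  unfold cutF rcut
  rw [avoid_edgeFinset]
  have h := Finset.card_filter_add_card_filter_not
    (s := G.edgeFinset.filter (fun e => Cross U e)) (p := fun e => Touch W e)
  rw [Finset.filter_comm (p := fun e => Cross U e) (q := fun e => Touch W e)] at h
  rw [Finset.filter_comm (p := fun e => Cross U e) (q := fun a => ¬ Touch W a)] at h
  omega

lemma cutF_congr {U U' : Set V} (h : ∀ e ∈ G.edgeSet, ∀ x ∈ e, (x ∈ U ↔ x ∈ U')) :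
    cutF G U = cutF G U' := by
  unfold cutF
  congr 1
  apply Finset.filter_congr
  intro e he
  exact cross_congr (h e (SimpleGraph.mem_edgeFinset.mp he))

lemma cutF_avoid_congr (W U X : Set V) (hX : X ⊆ W) :
    cutF (avoid G W) (U ∪ X) = cutF (avoid G W) U := by
  apply cutF_congr
  intro e he x hx
  rw [mem_avoid_edgeSet] at he
  have : x ∉ X := fun h => he.2 ⟨x, hx, hX h⟩
  simp [Set.mem_union, this]

lemma rsize_single (v : V) : rsize G {v} = G.degree v := by
  classical
  rw [← SimpleGraph.card_incidenceFinset_eq_degree, SimpleGraph.incidenceFinset_eq_filter]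
  unfold rsize
  rw [show (G.edgeFinset.filter (fun e => Touch ({v} : Set V) e))
      = G.edgeFinset.filter (fun e => v ∈ e) from
    Finset.filter_congr (by intro e _; simp [Touch])]

lemma single_gain (v : V) (U' : Set V) (hv : v ∉ U') (hodd : Odd (G.degree v)) :
    ∃ U : Set V, U ⊆ U' ∪ {v} ∧
      2 * (cutF (avoid G {v}) U') + rsize G {v} + 1 ≤ 2 * cutF G U := by
  have hrep : ∀ e ∈ G.edgeFinset.filter (fun e => Touch ({v} : Set V) e),
      ∃ w, e = s(v, w) ∧ w ≠ v := by
    intro e he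
    rw [Finset.mem_filter] at he
    obtain ⟨heG, x, hx, hxv⟩ := he
    rw [Set.mem_singleton_iff] at hxv
    subst hxv
    obtain ⟨w, hw⟩ := Sym2.mem_iff_exists.mp hx
    refine ⟨w, hw, fun hcon => ?_⟩
    subst hcon
    rw [hw, SimpleGraph.mem_edgeFinset, SimpleGraph.mem_edgeSet] at heG
    exact heG.ne rfl
  have hpart : rcut G {v} U' + rcut G {v} (U' ∪ {v}) = rsize G {v} := by
    unfold rcut rsize
    have h2 : (G.edgeFinset.filter (fun e => Touch ({v} : Set V) e)).filter
        (fun e => Cross (U' ∪ {v}) e)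
        = (G.edgeFinset.filter (fun e => Touch ({v} : Set V) e)).filter
          (fun e => ¬ Cross U' e) := by
      apply Finset.filter_congr
      intro e he
      obtain ⟨w, rfl, hwv⟩ := hrep e he
      rw [cross_mk_right (show v ∈ U' ∪ {v} by simp), cross_mk_left hv]
      simp [Set.mem_union, hwv]
    rw [h2]
    exact Finset.card_filter_add_card_filter_not _
  have hc0 : cutF G U' = cutF (avoid G {v}) U' + rcut G {v} U' := cutF_split G {v} U'
  have hc1 : cutF G (U' ∪ {v}) = cutF (avoid G {v}) U' + rcut G {v} (U' ∪ {v}) := by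
    rw [cutF_split G {v} (U' ∪ {v}), cutF_avoid_congr G {v} U' {v} subset_rfl]
  have hodd' : Odd (rsize G {v}) := by rwa [rsize_single]
  obtain ⟨t, ht⟩ := hodd'
  rcases le_or_gt (rcut G {v} U') (rcut G {v} (U' ∪ {v})) with h | h
  · exact ⟨U' ∪ {v}, subset_rfl, by omega⟩
  · exact ⟨U', Set.subset_union_left, by omega⟩

lemma pair_cross_sum {u v : V} (huv : u ≠ v) (U' : Set V) (hu : u ∉ U') (hv : v ∉ U')
    {e : Sym2 V} (heG : e ∈ G.edgeSet) (hmem : Touch ({u, v} : Set V) e) :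
    ((if Cross (U' ∪ {u}) e then 1 else 0) + (if Cross (U' ∪ {v}) e then 1 else 0) : ℕ)
      = if e = s(u, v) then 2 else 1 := by
  have hx' : u ∈ e ∨ v ∈ e := by
    obtain ⟨x, hx, hxuv⟩ := hmem
    rcases hxuv with h | h
    · exact Or.inl (h ▸ hx)
    · exact Or.inr (h ▸ hx)
  by_cases hc : e = s(u, v)
  · subst hc
    have h1 : Cross (U' ∪ {u}) s(u, v) := by
      rw [cross_mk_right (show u ∈ U' ∪ {u} by simp)]
      simp [hv, huv.symm]
    have h2 : Cross (U' ∪ {v}) s(u, v) := by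
      rw [Sym2.eq_swap, cross_mk_right (show v ∈ U' ∪ {v} by simp)]
      simp [hu, huv]
    rw [if_pos rfl, if_pos h1, if_pos h2]
  · rw [if_neg hc]
    rcases hx' with hx | hx
    · obtain ⟨w, rfl⟩ := Sym2.mem_iff_exists.mp hx
      have hwu : w ≠ u := fun h => by
        subst h; exact (G.mem_edgeSet.mp heG).ne rfl
      have hwv : w ≠ v := fun h => by subst h; exact hc rfl
      have h1 : Cross (U' ∪ {u}) s(u, w) ↔ w ∉ U' := by
        rw [cross_mk_right (show u ∈ U' ∪ {u} by simp)]
        simp [Set.mem_union, hwu]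
      have h2 : Cross (U' ∪ {v}) s(u, w) ↔ w ∈ U' := by
        rw [cross_mk_left (show u ∉ U' ∪ {v} by simp [hu, huv])]
        simp [Set.mem_union, hwv]
      by_cases hw : w ∈ U'
      · rw [if_neg (fun hcr => (h1.mp hcr) hw), if_pos (h2.mpr hw)]
      · rw [if_pos (h1.mpr hw), if_neg (fun hcr => hw (h2.mp hcr))]
    · obtain ⟨w, rfl⟩ := Sym2.mem_iff_exists.mp hx
      have hwv : w ≠ v := fun h => by
        subst h; exact (G.mem_edgeSet.mp heG).ne rfl
      have hwu : w ≠ u := fun h => by subst h; exact hc Sym2.eq_swap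
      have h1 : Cross (U' ∪ {u}) s(v, w) ↔ w ∈ U' := by
        rw [cross_mk_left (show v ∉ U' ∪ {u} by simp [hv, huv.symm])]
        simp [Set.mem_union, hwu]
      have h2 : Cross (U' ∪ {v}) s(v, w) ↔ w ∉ U' := by
        rw [cross_mk_right (show v ∈ U' ∪ {v} by simp)]
        simp [Set.mem_union, hwv]
      by_cases hw : w ∈ U'
      · rw [if_pos (h1.mpr hw), if_neg (fun hcr => (h2.mp hcr) hw)]
      · rw [if_neg (fun hcr => hw (h1.mp hcr)), if_pos (h2.mpr hw)]

lemma pair_gain {u v : V} (huv : G.Adj u v) (U' : Set V) (hu : u ∉ U') (hv : v ∉ U') :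
    ∃ U : Set V, U ⊆ U' ∪ {u, v} ∧
      2 * (cutF (avoid G {u, v}) U') + rsize G {u, v} + 1 ≤ 2 * cutF G U := by
  have hkey : rcut G {u, v} (U' ∪ {u}) + rcut G {u, v} (U' ∪ {v}) = rsize G {u, v} + 1 := by
    unfold rcut rsize
    rw [Finset.card_filter, Finset.card_filter, ← Finset.sum_add_distrib]
    have hcongr : ∀ e ∈ G.edgeFinset.filter (fun e => Touch ({u, v} : Set V) e),
        ((if Cross (U' ∪ {u}) e then 1 else 0) + (if Cross (U' ∪ {v}) e then 1 else 0) : ℕ)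
          = if e = s(u, v) then 2 else 1 := by
      intro e he
      rw [Finset.mem_filter] at he
      exact pair_cross_sum G huv.ne U' hu hv (SimpleGraph.mem_edgeFinset.mp he.1) he.2
    rw [Finset.sum_congr rfl hcongr]
    have hmem : s(u, v) ∈ G.edgeFinset.filter (fun e => Touch ({u, v} : Set V) e) := by
      rw [Finset.mem_filter]
      exact ⟨SimpleGraph.mem_edgeFinset.mpr (G.mem_edgeSet.mpr huv),
        ⟨u, Sym2.mem_mk_left u v, by simp⟩⟩
    have h21 : ∀ e ∈ G.edgeFinset.filter (fun e => Touch ({u, v} : Set V) e),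
        (if e = s(u, v) then 2 else 1 : ℕ) = 1 + (if e = s(u, v) then 1 else 0) := by
      intro e _
      by_cases h : e = s(u, v) <;> simp [h]
    rw [Finset.sum_congr rfl h21, Finset.sum_add_distrib, Finset.sum_const,
      Finset.sum_ite_eq' _ s(u, v) (fun _ => 1), if_pos hmem]
    simp [mul_comm]
  have hc01 : cutF G (U' ∪ {u}) = cutF (avoid G {u, v}) U' + rcut G {u, v} (U' ∪ {u}) := by
    rw [cutF_split G {u, v} (U' ∪ {u}),
      cutF_avoid_congr G {u, v} U' {u} (Set.singleton_subset_iff.mpr (by simp))]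
  have hc10 : cutF G (U' ∪ {v}) = cutF (avoid G {u, v}) U' + rcut G {u, v} (U' ∪ {v}) := by
    rw [cutF_split G {u, v} (U' ∪ {v}),
      cutF_avoid_congr G {u, v} U' {v} (Set.singleton_subset_iff.mpr (by simp))]
  rcases le_or_gt (rcut G {u, v} (U' ∪ {u})) (rcut G {u, v} (U' ∪ {v})) with h | h
  · refine ⟨U' ∪ {v}, Set.union_subset_union_right _ (Set.singleton_subset_iff.mpr (by simp)), by omega⟩
  · refine ⟨U' ∪ {u}, Set.union_subset_union_right _ (Set.singleton_subset_iff.mpr (by simp)), by omega⟩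

end fin

/-- a shortest-path-like walk: all non-initial vertices are strictly closer to `r` -/
lemma exists_good_walk (G : SimpleGraph V) (r : V) :
    ∀ (n : ℕ) (w : V), G.dist w r = n → G.Reachable w r →
      ∃ p : G.Walk w r, ∀ x ∈ p.support, x = w ∨ G.dist x r < G.dist w r := by
  intro n
  induction n using Nat.strong_induction_on with
  | _ n ih =>
    intro w hn hr
    by_cases hwr : w = r
    · subst hwr
      exact ⟨SimpleGraph.Walk.nil, by simp⟩
    · obtain ⟨p, hp⟩ := hr.exists_walk_length_eq_dist
      cases p with
      | nil => exact absurd rfl hwr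
      | @cons _ y _ h q =>
        have hq : G.dist y r ≤ q.length := SimpleGraph.dist_le q
        have hlen : q.length + 1 = G.dist w r := by
          simpa using hp
        have hylt : G.dist y r < n := by omega
        obtain ⟨p', hp'⟩ := ih (G.dist y r) (by omega) y rfl ⟨q⟩
        refine ⟨SimpleGraph.Walk.cons h p', ?_⟩
        intro x hx
        rw [SimpleGraph.Walk.support_cons, List.mem_cons] at hx
        rcases hx with rfl | hx
        · exact Or.inl rfl
        · rcases hp' x hx with rfl | hlt
          · right; omega
          · right; omega

lemma exists_adj_dist (G : SimpleGraph V) {w r : V} (hr : G.Reachable w r) (hwr : w ≠ r) :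
    ∃ x, G.Adj w x ∧ G.dist x r + 1 = G.dist w r := by
  obtain ⟨p, hp⟩ := hr.exists_walk_length_eq_dist
  cases p with
  | nil => exact absurd rfl hwr
  | @cons _ y _ h q =>
    have hq : G.dist y r ≤ q.length := SimpleGraph.dist_le q
    have hlen : q.length + 1 = G.dist w r := by simpa using hp
    have hyr : G.Reachable y r := ⟨q⟩
    obtain ⟨q', hq'⟩ := hyr.exists_walk_length_eq_dist
    have hle : G.dist w r ≤ G.dist y r + 1 := by
      have := SimpleGraph.dist_le (SimpleGraph.Walk.cons h q')
      simpa [hq'] using this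
    exact ⟨y, h, by omega⟩

lemma walk_avoid {G : SimpleGraph V} {W : Set V} :
    ∀ {a b : V} (p : G.Walk a b), (∀ x ∈ p.support, x ∉ W) → (avoid G W).Reachable a b := by
  intro a b p
  induction p with
  | nil => intro _; exact SimpleGraph.Reachable.refl _
  | @cons u y _ h q ih =>
    intro hsup
    have hu : u ∉ W := hsup u (by simp)
    have hy : y ∉ W := hsup y (by
      rw [SimpleGraph.Walk.support_cons, List.mem_cons]
      exact Or.inr q.start_mem_support)
    refine (SimpleGraph.Adj.reachable ?_).trans (ih ?_)
    · exact ⟨h, hu, hy⟩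
    · intro x hx
      exact hsup x (by rw [SimpleGraph.Walk.support_cons, List.mem_cons]; exact Or.inr hx)

section fin
variable [Fintype V]

lemma structure_lemma (G : SimpleGraph V) (S : Finset V)
    (hE : ∀ e ∈ G.edgeSet, ∀ x ∈ e, x ∈ S)
    (hconn : ∀ a ∈ S, ∀ b ∈ S, G.Reachable a b)
    (h2 : 2 ≤ #S) :
    (∃ v ∈ S, Odd (G.degree v) ∧
        ∀ a ∈ S, a ≠ v → ∀ b ∈ S, b ≠ v → (avoid G {v}).Reachable a b)
    ∨ (∃ u ∈ S, ∃ v ∈ S, G.Adj u v ∧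
        ∀ a ∈ S, a ∉ ({u, v} : Set V) → ∀ b ∈ S, b ∉ ({u, v} : Set V) →
          (avoid G {u, v}).Reachable a b) := by
  classical
  have hSne : S.Nonempty := Finset.card_pos.mp (by omega)
  obtain ⟨r, hrS⟩ := hSne
  have hreach : ∀ w ∈ S, G.Reachable w r := fun w hw => hconn w hw r hrS
  set D := S.sup (fun w => G.dist w r) with hD
  have hDle : ∀ w ∈ S, G.dist w r ≤ D := by
    intro w hw
    rw [hD]
    exact Finset.le_sup (f := fun w => G.dist w r) hw
  have hdist0 : ∀ w ∈ S, G.dist w r = 0 → w = r := by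
    intro w hw h0
    exact ((hreach w hw).dist_eq_zero_iff).mp h0
  -- membership of adjacent vertices
  have hadjS : ∀ {a b : V}, G.Adj a b → b ∈ S := by
    intro a b h
    exact hE s(a, b) (G.mem_edgeSet.mpr h) b (Sym2.mem_mk_right a b)
  -- D ≥ 1
  obtain ⟨w0, hw0S, hw0r⟩ := Finset.exists_mem_ne (s := S) (by omega) r
  have hD1 : 1 ≤ D := by
    have := hDle w0 hw0S
    rcases Nat.eq_zero_or_pos (G.dist w0 r) with h0 | h0
    · exact absurd (hdist0 w0 hw0S h0) hw0r
    · omega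
  by_cases hodd : ∃ v ∈ S, G.dist v r = D ∧ Odd (G.degree v)
  · obtain ⟨v, hvS, hvD, hvOdd⟩ := hodd
    left
    refine ⟨v, hvS, hvOdd, ?_⟩
    have hto : ∀ a ∈ S, a ≠ v → (avoid G ({v} : Set V)).Reachable a r := by
      intro a haS hav
      obtain ⟨p, hp⟩ := exists_good_walk G r (G.dist a r) a rfl (hreach a haS)
      apply walk_avoid p
      intro x hx hxW
      rw [Set.mem_singleton_iff] at hxW
      subst hxW
      rcases hp x hx with h | h
      · exact hav h.symm
      · have := hDle a haS
        omega
    intro a haS hav b hbS hbv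
    exact (hto a haS hav).trans (hto b hbS hbv).symm
  · by_cases hadj : ∃ u ∈ S, ∃ v ∈ S, G.dist u r = D ∧ G.dist v r = D ∧ G.Adj u v
    · obtain ⟨u, huS, v, hvS, huD, hvD, huv⟩ := hadj
      right
      refine ⟨u, huS, v, hvS, huv, ?_⟩
      have hto : ∀ a ∈ S, a ∉ ({u, v} : Set V) → (avoid G ({u, v} : Set V)).Reachable a r := by
        intro a haS haW
        obtain ⟨p, hp⟩ := exists_good_walk G r (G.dist a r) a rfl (hreach a haS)
        apply walk_avoid p
        intro x hx hxW
        rcases hp x hx with h | h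
        · exact haW (h ▸ hxW)
        · have := hDle a haS
          rcases hxW with rfl | hxv
          · omega
          · rw [Set.mem_singleton_iff] at hxv
            subst hxv
            omega
      intro a haS haW b hbS hbW
      exact (hto a haS haW).trans (hto b hbS hbW).symm
    · -- case 3 : all max-distance vertices have even degree and form an independent set
      push_neg at hodd hadj
      obtain ⟨v0, hv0S, hv0D⟩ := Finset.exists_mem_eq_sup S ⟨r, hrS⟩ (fun w => G.dist w r)
      rw [← hD] at hv0D
      have hv0r : v0 ≠ r := by
        intro h
        rw [h] at hv0D
        rw [SimpleGraph.dist_self] at hv0D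
        omega
      obtain ⟨u, huadj, hudist⟩ := exists_adj_dist G (hreach v0 hv0S) hv0r
      have huS : u ∈ S := hadjS huadj
      -- D ≥ 2
      have hD2 : 2 ≤ D := by
        by_contra hcon
        have hDeq : D = 1 := by omega
        -- all neighbors of v0 are r
        have hnbr : ∀ x, G.Adj v0 x → x = r := by
          intro x hx
          have hxS : x ∈ S := hadjS hx
          have : G.dist x r ≤ D := hDle x hxS
          rcases Nat.lt_or_ge (G.dist x r) D with h | h
          · exact hdist0 x hxS (by omega)
          · exact absurd hx (hadj v0 hv0S x hxS (hv0D.symm) (by omega))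
        have hsub : G.neighborFinset v0 ⊆ {r} := by
          intro x hx
          rw [SimpleGraph.mem_neighborFinset] at hx
          simp [hnbr x hx]
        have hdeg1 : G.degree v0 ≤ 1 := by
          rw [← SimpleGraph.card_neighborFinset_eq_degree]
          calc #(G.neighborFinset v0) ≤ #({r} : Finset V) := Finset.card_le_card hsub
          _ = 1 := Finset.card_singleton r
        have hdegpos : 0 < G.degree v0 := by
          rw [← SimpleGraph.card_neighborFinset_eq_degree]
          exact Finset.card_pos.mpr ⟨u, (SimpleGraph.mem_neighborFinset _ _ _).mpr huadj⟩
        have : G.degree v0 = 1 := by omega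
        exact (hodd v0 hv0S hv0D.symm) (this ▸ odd_one)
      have hur : u ≠ r := by
        intro h
        subst h
        rw [SimpleGraph.dist_self] at hudist
        omega
      right
      refine ⟨v0, hv0S, u, huS, huadj, ?_⟩
      have hv0D' : G.dist v0 r = D := hv0D.symm
      have hto : ∀ a ∈ S, a ∉ ({v0, u} : Set V) → (avoid G ({v0, u} : Set V)).Reachable a r := by
        intro a haS haW
        have haDle := hDle a haS
        by_cases hda : G.dist a r = D
        · -- a is at maximum distance: even degree, pick a neighbor ≠ u
          have hane : a ≠ r := by
            intro h; subst h; rw [SimpleGraph.dist_self] at hda; omega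
          obtain ⟨x0, hx0adj, _⟩ := exists_adj_dist G (hreach a haS) hane
          have : ∃ x, G.Adj a x ∧ x ≠ u := by
            by_contra hcon
            push_neg at hcon
            have hsub : G.neighborFinset a ⊆ {u} := by
              intro x hx
              rw [SimpleGraph.mem_neighborFinset] at hx
              simp [hcon x hx]
            have hdeg1 : G.degree a ≤ 1 := by
              rw [← SimpleGraph.card_neighborFinset_eq_degree]
              calc #(G.neighborFinset a) ≤ #({u} : Finset V) := Finset.card_le_card hsub
              _ = 1 := Finset.card_singleton u
            have hdegpos : 0 < G.degree a := by
              rw [← SimpleGraph.card_neighborFinset_eq_degree]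
              exact Finset.card_pos.mpr ⟨x0, (SimpleGraph.mem_neighborFinset _ _ _).mpr hx0adj⟩
            have hdeq : G.degree a = 1 := by omega
            exact (hodd a haS hda) (hdeq ▸ odd_one)
          obtain ⟨x, hxadj, hxu⟩ := this
          have hxS : x ∈ S := hadjS hxadj
          have hxD : G.dist x r ≠ D := fun h => (hadj a haS x hxS hda h) hxadj
          have hxlt : G.dist x r < D := lt_of_le_of_ne (hDle x hxS) hxD
          have hxv0 : x ≠ v0 := by intro h; subst h; omega
          obtain ⟨p, hp⟩ := exists_good_walk G r (G.dist x r) x rfl (hreach x hxS)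
          have hxr : (avoid G ({v0, u} : Set V)).Reachable x r := by
            apply walk_avoid p
            intro y hy hyW
            rcases hp y hy with rfl | hlt
            · rcases hyW with h | h
              · exact hxv0 h
              · exact hxu (Set.mem_singleton_iff.mp h)
            · rcases hyW with rfl | h
              · omega
              · rw [Set.mem_singleton_iff] at h
                subst h
                omega
          have hax : (avoid G ({v0, u} : Set V)).Adj a x := by
            refine ⟨hxadj, haW, ?_⟩
            rintro (h | h)
            · exact hxv0 h
            · exact hxu (Set.mem_singleton_iff.mp h)
          exact (SimpleGraph.Adj.reachable hax).trans hxr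
        · -- a is not at maximum distance
          have halt : G.dist a r < D := lt_of_le_of_ne haDle hda
          obtain ⟨p, hp⟩ := exists_good_walk G r (G.dist a r) a rfl (hreach a haS)
          apply walk_avoid p
          intro y hy hyW
          rcases hp y hy with rfl | hlt
          · exact haW hyW
          · rcases hyW with rfl | h
            · omega
            · rw [Set.mem_singleton_iff] at h
              subst h
              omega
      intro a haS haW b hbS hbW
      exact (hto a haS haW).trans (hto b hbS hbW).symm


lemma two_le_card_of_edge {G : SimpleGraph V} {S : Finset V}
    (hE : ∀ e ∈ G.edgeSet, ∀ x ∈ e, x ∈ S) (hne : G.edgeFinset.Nonempty) : 2 ≤ #S := by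
  obtain ⟨e, he⟩ := hne
  have heS := SimpleGraph.mem_edgeFinset.mp he
  revert heS
  refine Sym2.ind (fun x y heS => ?_) e
  have hadj : G.Adj x y := G.mem_edgeSet.mp heS
  have hx : x ∈ S := hE _ heS x (Sym2.mem_mk_left x y)
  have hy : y ∈ S := hE _ heS y (Sym2.mem_mk_right x y)
  exact Finset.one_lt_card.mpr ⟨x, hx, y, hy, hadj.ne⟩

lemma key_base (G : SimpleGraph V) (S : Finset V)
    (hE : ∀ e ∈ G.edgeSet, ∀ x ∈ e, x ∈ S) (hS1 : #S ≤ 1) :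
    ∃ U : Set V, U ⊆ ↑S ∧ 4 * esize G + 2 * #S ≤ 8 * cutF G U + 2 := by
  have hm : esize G = 0 := by
    by_contra h0
    have hpos : 0 < #G.edgeFinset := Nat.pos_of_ne_zero h0
    have := two_le_card_of_edge hE (Finset.card_pos.mp hpos)
    omega
  exact ⟨∅, Set.empty_subset _, by omega⟩

lemma key :
    ∀ (N : ℕ) (G : SimpleGraph V) (S : Finset V), #S ≤ N →
      (∀ e ∈ G.edgeSet, ∀ x ∈ e, x ∈ S) → (∀ a ∈ S, ∀ b ∈ S, G.Reachable a b) →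
      ∃ U : Set V, U ⊆ ↑S ∧ 4 * esize G + 2 * #S ≤ 8 * cutF G U + 2 := by
  intro N
  induction N with
  | zero =>
    intro G S hcard hE _
    exact key_base G S hE (by omega)
  | succ N ih =>
    intro G S hcard hE hconn
    by_cases hS1 : #S ≤ 1
    · exact key_base G S hE hS1
    · have h2 : 2 ≤ #S := by omega
      rcases structure_lemma G S hE hconn h2 with
        ⟨v, hvS, hodd, hconn'⟩ | ⟨u, huS, v, hvS, hadj, hconn'⟩
      · -- remove a single odd-degree vertex
        have hE' : ∀ e ∈ (avoid G ({v} : Set V)).edgeSet, ∀ x ∈ e, x ∈ S.erase v := by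
          intro e he x hx
          rw [mem_avoid_edgeSet] at he
          refine Finset.mem_erase.mpr ⟨?_, hE e he.1 x hx⟩
          intro h
          exact he.2 ⟨x, hx, Set.mem_singleton_iff.mpr h⟩
        have hconn'' : ∀ a ∈ S.erase v, ∀ b ∈ S.erase v,
            (avoid G ({v} : Set V)).Reachable a b := by
          intro a ha b hb
          rw [Finset.mem_erase] at ha hb
          exact hconn' a ha.2 ha.1 b hb.2 hb.1
        have hce : #(S.erase v) = #S - 1 := Finset.card_erase_of_mem hvS
        obtain ⟨U', hU'sub, hineq⟩ := ih (avoid G ({v} : Set V)) (S.erase v)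
          (by omega) hE' hconn''
        have hv' : v ∉ U' := by
          intro h
          have := hU'sub h
          rw [Finset.mem_coe, Finset.mem_erase] at this
          exact this.1 rfl
        obtain ⟨U, hUsub, hgain⟩ := single_gain G v U' hv' hodd
        refine ⟨U, ?_, ?_⟩
        · intro x hx
          rcases hUsub hx with h | h
          · have := hU'sub h
            rw [Finset.mem_coe, Finset.mem_erase] at this
            exact Finset.mem_coe.mpr this.2
          · rw [Set.mem_singleton_iff] at h
            subst h
            exact Finset.mem_coe.mpr hvS
        · have hes := esize_split G ({v} : Set V)
          omega
      · -- remove an adjacent pair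
        have huv : u ≠ v := hadj.ne
        have hmem2 : ∀ {x : V}, x ∈ (S.erase u).erase v ↔ x ∈ S ∧ x ∉ ({u, v} : Set V) := by
          intro x
          rw [Finset.mem_erase, Finset.mem_erase]
          constructor
          · rintro ⟨hxv, hxu, hxS⟩
            refine ⟨hxS, ?_⟩
            rintro (h | h)
            · exact hxu h
            · exact hxv (Set.mem_singleton_iff.mp h)
          · rintro ⟨hxS, hW⟩
            refine ⟨fun h => hW (by simp [h]), fun h => hW (by simp [h]), hxS⟩
        have hE' : ∀ e ∈ (avoid G ({u, v} : Set V)).edgeSet, ∀ x ∈ e,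
            x ∈ (S.erase u).erase v := by
          intro e he x hx
          rw [mem_avoid_edgeSet] at he
          exact hmem2.mpr ⟨hE e he.1 x hx, fun h => he.2 ⟨x, hx, h⟩⟩
        have hconn'' : ∀ a ∈ (S.erase u).erase v, ∀ b ∈ (S.erase u).erase v,
            (avoid G ({u, v} : Set V)).Reachable a b := by
          intro a ha b hb
          rw [hmem2] at ha hb
          exact hconn' a ha.1 ha.2 b hb.1 hb.2
        have hveu : v ∈ S.erase u := Finset.mem_erase.mpr ⟨huv.symm, hvS⟩
        have hce : #((S.erase u).erase v) = #S - 2 := by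
          rw [Finset.card_erase_of_mem hveu, Finset.card_erase_of_mem huS]
          omega
        obtain ⟨U', hU'sub, hineq⟩ := ih (avoid G ({u, v} : Set V)) ((S.erase u).erase v)
          (by omega) hE' hconn''
        have hu' : u ∉ U' := by
          intro h
          have := hmem2.mp (Finset.mem_coe.mp (hU'sub h))
          exact this.2 (by simp)
        have hv' : v ∉ U' := by
          intro h
          have := hmem2.mp (Finset.mem_coe.mp (hU'sub h))
          exact this.2 (by simp)
        obtain ⟨U, hUsub, hgain⟩ := pair_gain G hadj U' hu' hv'
        refine ⟨U, ?_, ?_⟩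
        · intro x hx
          rcases hUsub hx with h | h
          · exact Finset.mem_coe.mpr (hmem2.mp (Finset.mem_coe.mp (hU'sub h))).1
          · rcases h with h | h
            · subst h; exact Finset.mem_coe.mpr huS
            · rw [Set.mem_singleton_iff] at h; subst h; exact Finset.mem_coe.mpr hvS
        · have hes := esize_split G ({u, v} : Set V)
          omega

lemma esize_bound (G : SimpleGraph V) (S : Finset V)
    (hE : ∀ e ∈ G.edgeSet, ∀ x ∈ e, x ∈ S) :
    2 * esize G ≤ #S * (#S - 1) := by
  classical
  have hadjS : ∀ {a b : V}, G.Adj a b → b ∈ S := by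
    intro a b h
    exact hE s(a, b) (G.mem_edgeSet.mpr h) b (Sym2.mem_mk_right a b)
  have hsum : ∑ w, G.degree w = 2 * esize G := G.sum_degrees_eq_twice_card_edges
  have hzero : ∀ w ∈ Finset.univ, w ∉ S → G.degree w = 0 := by
    intro w _ hw
    rw [← SimpleGraph.card_neighborFinset_eq_degree, Finset.card_eq_zero]
    ext y
    simp only [SimpleGraph.mem_neighborFinset, Finset.notMem_empty, iff_false]
    intro hadj
    exact hw (hadjS hadj.symm)
  have hSsum : ∑ w ∈ S, G.degree w = ∑ w, G.degree w :=
    Finset.sum_subset (Finset.subset_univ S) hzero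
  have hbound : ∀ w ∈ S, G.degree w ≤ #S - 1 := by
    intro w hw
    rw [← SimpleGraph.card_neighborFinset_eq_degree]
    have hsub : G.neighborFinset w ⊆ S.erase w := by
      intro y hy
      rw [SimpleGraph.mem_neighborFinset] at hy
      exact Finset.mem_erase.mpr ⟨hy.ne', hadjS hy⟩
    calc #(G.neighborFinset w) ≤ #(S.erase w) := Finset.card_le_card hsub
    _ = #S - 1 := Finset.card_erase_of_mem hw
  have hle : ∑ w ∈ S, G.degree w ≤ #S * (#S - 1) := by
    calc ∑ w ∈ S, G.degree w ≤ #S • (#S - 1) := Finset.sum_le_card_nsmul S _ _ hbound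
    _ = #S * (#S - 1) := by simp
  omega

lemma key1 :
    ∀ (N : ℕ) (G : SimpleGraph V) (S : Finset V), #S ≤ N →
      (∀ e ∈ G.edgeSet, ∀ x ∈ e, x ∈ S) →
      ∃ U : Set V, U ⊆ ↑S ∧ ∃ k : ℝ, 0 ≤ k ∧
        4 * (esize G : ℝ) + 4 * k ≤ 8 * (cutF G U : ℝ) ∧
        (esize G : ℝ) ≤ 2 * k ^ 2 + k := by
  intro N
  induction N using Nat.strong_induction_on with
  | _ N ih =>
    intro G S hcard hE
    by_cases hconn : ∀ a ∈ S, ∀ b ∈ S, G.Reachable a b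
    · by_cases hS0 : #S = 0
      · have hm : esize G = 0 := by
          by_contra h0
          have hpos : 0 < #G.edgeFinset := Nat.pos_of_ne_zero h0
          have := two_le_card_of_edge hE (Finset.card_pos.mp hpos)
          omega
        refine ⟨∅, Set.empty_subset _, 0, le_refl _, ?_, ?_⟩
        · have h8 : (0 : ℝ) ≤ 8 * (cutF G ∅ : ℝ) := by positivity
          rw [hm]
          push_cast
          linarith
        · rw [hm]; norm_num
      · have h1 : 1 ≤ #S := by omega
        obtain ⟨U, hUsub, hineq⟩ := key #S G S le_rfl hE hconn
        have hbd := esize_bound G S hE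
        have hcast : ((#S : ℕ) : ℝ) - 1 = ((#S - 1 : ℕ) : ℝ) := by
          rw [Nat.cast_sub h1]
          norm_num
        refine ⟨U, hUsub, ((#S : ℝ) - 1) / 2, ?_, ?_, ?_⟩
        · have : (1 : ℝ) ≤ (#S : ℝ) := by exact_mod_cast h1
          linarith
        · have hineq' : 4 * (esize G : ℝ) + 2 * (#S : ℝ) ≤ 8 * (cutF G U : ℝ) + 2 := by
            exact_mod_cast hineq
          linarith
        · have hbd' : 2 * (esize G : ℝ) ≤ (#S : ℝ) * ((#S : ℝ) - 1) := by
            rw [hcast]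
            exact_mod_cast hbd
          nlinarith [hbd']
    · push_neg at hconn
      obtain ⟨u, huS, v, hvS, hnr⟩ := hconn
      set S₁ := S.filter (fun x => G.Reachable u x) with hS₁
      set S₂ := S.filter (fun x => ¬ G.Reachable u x) with hS₂
      have huS₁ : u ∈ S₁ := by
        rw [hS₁, Finset.mem_filter]
        exact ⟨huS, SimpleGraph.Reachable.refl u⟩
      have hvS₂ : v ∈ S₂ := by
        rw [hS₂, Finset.mem_filter]
        exact ⟨hvS, hnr⟩
      have hvnS₁ : v ∉ S₁ := by
        rw [hS₁, Finset.mem_filter]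
        rintro ⟨_, h⟩
        exact hnr h
      have hunS₂ : u ∉ S₂ := by
        rw [hS₂, Finset.mem_filter]
        rintro ⟨_, h⟩
        exact h (SimpleGraph.Reachable.refl u)
      -- edge dichotomy
      have hdich : ∀ e ∈ G.edgeSet, (∀ x ∈ e, x ∈ (S₁ : Set V)) ∨ (∀ x ∈ e, x ∉ (S₁ : Set V)) := by
        intro e he
        revert he
        refine Sym2.ind (fun x y he => ?_) e
        have hadj : G.Adj x y := G.mem_edgeSet.mp he
        have hxS : x ∈ S := hE _ he x (Sym2.mem_mk_left x y)
        have hyS : y ∈ S := hE _ he y (Sym2.mem_mk_right x y)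
        by_cases hx : G.Reachable u x
        · left
          intro z hz
          rcases Sym2.mem_iff.mp hz with rfl | rfl
          · rw [Finset.mem_coe, hS₁, Finset.mem_filter]; exact ⟨hxS, hx⟩
          · rw [Finset.mem_coe, hS₁, Finset.mem_filter]
            exact ⟨hyS, hx.trans hadj.reachable⟩
        · right
          intro z hz hzS₁
          rw [Finset.mem_coe, hS₁, Finset.mem_filter] at hzS₁
          rcases Sym2.mem_iff.mp hz with rfl | rfl
          · exact hx hzS₁.2
          · exact hx (hzS₁.2.trans hadj.symm.reachable)
      set G₁ := avoid G ((S₁ : Set V)ᶜ) with hG₁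
      set G₂ := avoid G (S₁ : Set V) with hG₂
      have hE₁ : ∀ e ∈ G₁.edgeSet, ∀ x ∈ e, x ∈ S₁ := by
        intro e he x hx
        rw [hG₁, mem_avoid_edgeSet] at he
        by_contra hxn
        exact he.2 ⟨x, hx, fun h => hxn (Finset.mem_coe.mp h)⟩
      have hE₂ : ∀ e ∈ G₂.edgeSet, ∀ x ∈ e, x ∈ S₂ := by
        intro e he x hx
        rw [hG₂, mem_avoid_edgeSet] at he
        have hxS : x ∈ S := hE e he.1 x hx
        have hxn : x ∉ S₁ := fun h => he.2 ⟨x, hx, Finset.mem_coe.mpr h⟩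
        rw [hS₂, Finset.mem_filter]
        refine ⟨hxS, fun hr => hxn ?_⟩
        rw [hS₁, Finset.mem_filter]
        exact ⟨hxS, hr⟩
      -- G₁ edges are exactly the edges touching S₁
      have hG₁edges : G₁.edgeFinset = G.edgeFinset.filter (fun e => Touch (S₁ : Set V) e) := by
        rw [hG₁, avoid_edgeFinset]
        apply Finset.filter_congr
        intro e he
        rw [SimpleGraph.mem_edgeFinset] at he
        obtain ⟨x, y, rfl⟩ : ∃ x y, e = s(x, y) := Sym2.ind (fun x y => ⟨x, y, rfl⟩) e
        rcases hdich _ he with h | h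
        · refine iff_of_true ?_ ?_
          · rintro ⟨z, hz, hzc⟩
            exact hzc (h z hz)
          · exact ⟨x, Sym2.mem_mk_left x y, Finset.mem_coe.mp (h x (Sym2.mem_mk_left x y))⟩
        · refine iff_of_false ?_ ?_
          · intro hnt
            exact hnt ⟨x, Sym2.mem_mk_left x y, h x (Sym2.mem_mk_left x y)⟩
          · rintro ⟨z, hz, hzS₁⟩
            exact h z hz (Finset.mem_coe.mpr hzS₁)
      have hesize : esize G = esize G₁ + esize G₂ := by
        have h1 : esize G₁ = rsize G (S₁ : Set V) := by
          unfold esize rsize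
          rw [hG₁edges]
        have h2 := esize_split G (S₁ : Set V)
        rw [← h1, ← hG₂] at h2
        omega
      have hcard₁ : #S₁ < N := by
        have : #S₁ < #S := Finset.card_lt_card
          ⟨Finset.filter_subset _ _, fun hsub => hvnS₁ (hsub hvS)⟩
        omega
      have hcard₂ : #S₂ < N := by
        have : #S₂ < #S := Finset.card_lt_card
          ⟨Finset.filter_subset _ _, fun hsub => hunS₂ (hsub huS)⟩
        omega
      obtain ⟨U₁, hU₁sub, k₁, hk₁0, hk₁le, hk₁m⟩ := ih #S₁ hcard₁ G₁ S₁ le_rfl hE₁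
      obtain ⟨U₂, hU₂sub, k₂, hk₂0, hk₂le, hk₂m⟩ := ih #S₂ hcard₂ G₂ S₂ le_rfl hE₂
      have hdisj : ∀ x, x ∈ S₁ → x ∉ S₂ := by
        intro x h1 h2
        rw [hS₁, Finset.mem_filter] at h1
        rw [hS₂, Finset.mem_filter] at h2
        exact h2.2 h1.2
      have hcut : cutF G (U₁ ∪ U₂) = cutF G₁ U₁ + cutF G₂ U₂ := by
        have hsplit := cutF_split G (S₁ : Set V) (U₁ ∪ U₂)
        have hrc : rcut G (S₁ : Set V) (U₁ ∪ U₂) = cutF G₁ (U₁ ∪ U₂) := by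
          unfold rcut cutF
          rw [hG₁edges]
        have hcg₁ : cutF G₁ (U₁ ∪ U₂) = cutF G₁ U₁ := by
          apply cutF_congr
          intro e he x hx
          have hxS₁ : x ∈ S₁ := hE₁ e he x hx
          have hxU₂ : x ∉ U₂ := fun h => hdisj x hxS₁ (Finset.mem_coe.mp (hU₂sub h))
          simp [Set.mem_union, hxU₂]
        have hcg₂ : cutF G₂ (U₁ ∪ U₂) = cutF G₂ U₂ := by
          apply cutF_congr
          intro e he x hx
          have hxS₂ : x ∈ S₂ := hE₂ e he x hx
          have hxU₁ : x ∉ U₁ := fun h => hdisj x (Finset.mem_coe.mp (hU₁sub h)) hxS₂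
          simp [Set.mem_union, hxU₁]
        rw [hrc, hcg₁, ← hG₂, hcg₂] at hsplit
        omega
      refine ⟨U₁ ∪ U₂, ?_, k₁ + k₂, by linarith, ?_, ?_⟩
      · intro x hx
        rcases hx with h | h
        · exact Finset.mem_coe.mpr (Finset.filter_subset _ _ (Finset.mem_coe.mp (hU₁sub h)))
        · exact Finset.mem_coe.mpr (Finset.filter_subset _ _ (Finset.mem_coe.mp (hU₂sub h)))
      · have he' : (esize G : ℝ) = (esize G₁ : ℝ) + (esize G₂ : ℝ) := by
          exact_mod_cast hesize
        have hc' : (cutF G (U₁ ∪ U₂) : ℝ) = (cutF G₁ U₁ : ℝ) + (cutF G₂ U₂ : ℝ) := by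
          exact_mod_cast hcut
        linarith
      · have he' : (esize G : ℝ) = (esize G₁ : ℝ) + (esize G₂ : ℝ) := by
          exact_mod_cast hesize
        nlinarith [mul_nonneg hk₁0 hk₂0]



end fin
end EdwardsProof

namespace EdwardsProof
variable {V : Type*} [Fintype V]

lemma cutSize_eq_cutF (G : SimpleGraph V) (U : Set V) : cutSize G U = cutF G U := by
  classical
  have hset : {e : Sym2 V | e ∈ G.edgeSet ∧ ∃ a b, e = s(a, b) ∧ a ∈ U ∧ b ∉ U}
      = ↑(G.edgeFinset.filter (fun e => Cross U e)) := by
    ext e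
    simp only [Set.mem_setOf_eq, Finset.coe_filter, Finset.mem_coe, Finset.mem_filter, Set.mem_sep_iff, SimpleGraph.mem_edgeFinset]
    exact Iff.rfl
  have h1 : cutSize G U
      = ({e : Sym2 V | e ∈ G.edgeSet ∧ ∃ a b, e = s(a, b) ∧ a ∈ U ∧ b ∉ U}).ncard :=
    (Nat.card_coe_set_eq _).symm
  rw [cutSize] at h1 ⊢
  rw [h1, hset, Set.ncard_coe_finset]
  rfl

lemma cutF_le_maxCut (G : SimpleGraph V) (U : Set V) : cutF G U ≤ maxCut G := by
  apply le_csSup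
  · refine ⟨esize G, ?_⟩
    rintro c ⟨U', rfl⟩
    rw [cutSize_eq_cutF]
    exact cutF_le G U'
  · exact ⟨U, (cutSize_eq_cutF G U).symm⟩

lemma nat_card_edges (G : SimpleGraph V) : Nat.card G.edgeSet = esize G := by
  classical
  rw [Nat.card_coe_set_eq, Set.ncard_eq_toFinset_card']
  unfold esize
  rw [SimpleGraph.edgeFinset]

end EdwardsProof


/-- Edwards' bounds. For a simple graph `G` with `n` vertices and `m`
edges: (1) `Γ(G) ≥ m/2 + (√(8m+1) − 1)/8`, and (2) if `G` is connected,
`Γ(G) ≥ m/2 + (n−1)/4`. -/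
theorem edwards_maxCut_bounds {V : Type*} [Fintype V] (G : SimpleGraph V) (n m : ℕ)
    (hn : Fintype.card V = n) (hm : Nat.card G.edgeSet = m) :
    (m : ℝ) / 2 + (Real.sqrt (8 * m + 1) - 1) / 8 ≤ (maxCut G : ℝ) ∧
      (G.Connected → (m : ℝ) / 2 + ((n : ℝ) - 1) / 4 ≤ (maxCut G : ℝ)) := by
  classical
  open EdwardsProof in
  have hmm : esize G = m := by rw [← hm, nat_card_edges]
  have hcu : #(Finset.univ : Finset V) = n := by rw [Finset.card_univ, hn]
  constructor
  · obtain ⟨U, hUsub, k, hk0, h1, h2⟩ := EdwardsProof.key1 (Fintype.card V) G Finset.univ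
      (by rw [Finset.card_univ]) (fun e _ x _ => Finset.mem_univ x)
    have hcut : (EdwardsProof.cutF G U : ℝ) ≤ (maxCut G : ℝ) := by
      exact_mod_cast EdwardsProof.cutF_le_maxCut G U
    rw [hmm] at h1 h2
    have hsqrt : Real.sqrt (8 * m + 1) ≤ 4 * k + 1 := by
      have hle : (8 * (m : ℝ) + 1) ≤ (4 * k + 1) ^ 2 := by nlinarith
      calc Real.sqrt (8 * m + 1) ≤ Real.sqrt ((4 * k + 1) ^ 2) := Real.sqrt_le_sqrt hle
      _ = 4 * k + 1 := Real.sqrt_sq (by linarith)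
    linarith
  · intro hconn
    obtain ⟨U, hUsub, hineq⟩ := EdwardsProof.key (Fintype.card V) G Finset.univ
      (by rw [Finset.card_univ]) (fun e _ x _ => Finset.mem_univ x)
      (fun a _ b _ => hconn.preconnected a b)
    have hcut : (EdwardsProof.cutF G U : ℝ) ≤ (maxCut G : ℝ) := by
      exact_mod_cast EdwardsProof.cutF_le_maxCut G U
    rw [hmm, hcu] at hineq
    have hineq' : 4 * (m : ℝ) + 2 * (n : ℝ) ≤ 8 * (EdwardsProof.cutF G U : ℝ) + 2 := by
      exact_mod_cast hineq
    linarith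
end

section
/- Let G be a simple graph on a finite nonempty vertex set V with n vertices and m edges, and suppose G is decodable (q odd sense). Then (1) b_G ≤ m/2 − (√(8m+1) − 1)/8, and (2) if G is connected, b_G ≤ m/2 − (n−1)/4 (both inequalities over the reals). -/
open SimpleGraph Finset

set_option maxHeartbeats 2000000

section Aux
variable {V : Type*}

/- ### Basic colorability and `bCut` lemmas -/

lemma aux_colorable2_mk {H : SimpleGraph V} (f : V → Fin 2)
    (hf : ∀ {u w}, H.Adj u w → f u ≠ f w) : H.Colorable 2 :=
  ⟨SimpleGraph.Coloring.mk f hf⟩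

lemma aux_induce_colorable {H : SimpleGraph V} (h : H.Colorable 2) (s : Set V) :
    (H.induce s).Colorable 2 := by
  obtain ⟨c⟩ := h
  exact ⟨c.comp (SimpleGraph.Embedding.induce s).toHom⟩

lemma aux_not_oddDecodable_of_colorable [Nonempty V] {H : SimpleGraph V}
    (h : H.Colorable 2) : ¬ OddDecodable H := by
  intro hd
  exact hd (H.connectedComponentMk (Classical.arbitrary V)) (aux_induce_colorable h _)

lemma aux_bCut_le [Fintype V] {G : SimpleGraph V} {k : ℕ}
    (h : ∃ D : Finset (Sym2 V), ↑D ⊆ G.edgeSet ∧ D.card = k ∧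
      ¬ OddDecodable (G.deleteEdges ↑D)) : bCut G ≤ k := by
  apply Nat.sInf_le
  have : Nonempty {D : Finset (Sym2 V) //
      ↑D ⊆ G.edgeSet ∧ D.card = k ∧ ¬ OddDecodable (G.deleteEdges ↑D)} := by
    obtain ⟨D, hD⟩ := h; exact ⟨⟨D, hD⟩⟩
  have : 0 < uG G k := Nat.card_pos
  exact this

lemma aux_eq_of_reachable_isolated {H : SimpleGraph V} {v u : V} (h : ∀ w, ¬ H.Adj v w)
    (hr : H.Reachable u v) : u = v := by
  obtain ⟨w⟩ := hr.symm
  cases w with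
  | nil => rfl
  | cons h' p => exact absurd h' (h _)

lemma aux_singleton_comp_colorable {H : SimpleGraph V} {v : V} (h : ∀ w, ¬ H.Adj v w) :
    (H.induce (H.connectedComponentMk v).supp).Colorable 2 := by
  apply aux_colorable2_mk (fun _ => 0)
  rintro ⟨u, hu⟩ ⟨w, hw⟩ hadj _
  rw [ConnectedComponent.mem_supp_iff, ConnectedComponent.eq] at hu hw
  have hu' := aux_eq_of_reachable_isolated h hu
  have hw' := aux_eq_of_reachable_isolated h hw
  subst hu' hw'
  exact H.irrefl hadj

lemma aux_not_oddDecodable_of_isolated {H : SimpleGraph V} {v : V}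
    (h : ∀ w, ¬ H.Adj v w) : ¬ OddDecodable H :=
  fun hd => hd _ (aux_singleton_comp_colorable h)

/-- Route I: delete all edges at a vertex. -/
lemma aux_bCut_le_degree [Fintype V] (G : SimpleGraph V) [DecidableRel G.Adj]
    [DecidableEq V] (v : V) : bCut G ≤ G.degree v := by
  apply aux_bCut_le
  refine ⟨G.incidenceFinset v, ?_, by rw [card_incidenceFinset_eq_degree], ?_⟩
  · intro e he
    rw [Finset.mem_coe, mem_incidenceFinset] at he
    exact he.1
  · apply aux_not_oddDecodable_of_isolated (v := v)
    intro w hadj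
    rw [deleteEdges_adj] at hadj
    exact hadj.2 (by
      rw [Finset.mem_coe, mem_incidenceFinset]
      exact ⟨G.mem_edgeSet.mpr hadj.1, Sym2.mem_mk_left v w⟩)

lemma aux_pos_degree [Fintype V] {G : SimpleGraph V} [DecidableRel G.Adj]
    (hdec : OddDecodable G) (v : V) : 0 < G.degree v := by
  by_contra h
  push_neg at h
  rw [Nat.le_zero] at h
  have h0 : ∀ w, ¬ G.Adj v w := by
    intro w hw
    have hmem : w ∈ G.neighborFinset v := by rwa [mem_neighborFinset]
    rw [← card_neighborFinset_eq_degree] at h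
    rw [Finset.card_eq_zero.mp h] at hmem
    exact absurd hmem (Finset.notMem_empty w)
  exact aux_not_oddDecodable_of_isolated h0 hdec

/-- Cross-partition helper. -/
lemma aux_bCut_le_of_cross [Fintype V] [Nonempty V] {G : SimpleGraph V}
    (D : Finset (Sym2 V)) (hD : ↑D ⊆ G.edgeSet) (f : V → Fin 2)
    (hf : ∀ u w, G.Adj u w → s(u, w) ∉ D → f u ≠ f w) : bCut G ≤ D.card := by
  apply aux_bCut_le
  refine ⟨D, hD, rfl, aux_not_oddDecodable_of_colorable ?_⟩
  apply aux_colorable2_mk f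
  intro u w hadj
  rw [deleteEdges_adj] at hadj
  exact hf u w hadj.1 hadj.2

/- ### Odd closed walks and odd cycles -/

lemma aux_exists_odd_closed_walk {H : SimpleGraph V} (h : ¬ H.Colorable 2) :
    ∃ (v : V) (w : H.Walk v v), Odd w.length := by
  classical
  by_contra hno
  push_neg at hno
  simp only [Nat.not_odd_iff_even] at hno
  apply h
  have hreach : ∀ v : V, Nonempty (H.Walk (H.connectedComponentMk v).out v) := by
    intro v
    have h1 : H.connectedComponentMk ((H.connectedComponentMk v).out) =
        H.connectedComponentMk v := (H.connectedComponentMk v).out_eq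
    exact ConnectedComponent.exact h1
  let p : ∀ v : V, H.Walk (H.connectedComponentMk v).out v := fun v => (hreach v).some
  apply aux_colorable2_mk (fun v => if Odd (p v).length then 0 else 1)
  intro u w hadj hf
  have hcc : H.connectedComponentMk u = H.connectedComponentMk w :=
    ConnectedComponent.sound hadj.reachable
  set r := (H.connectedComponentMk u).out with hr
  let q' : H.Walk r w := (p w).copy (by rw [hr, hcc]) rfl
  have hlq : q'.length = (p w).length := Walk.length_copy _ _ _
  let W : H.Walk r r := (p u).append ((Walk.cons hadj Walk.nil).append q'.reverse)
  have hW := hno r W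
  have hlen : W.length = (p u).length + (1 + q'.length) := by
    simp [W, Walk.length_append]; omega
  rw [hlen] at hW
  have hiff : Odd (p u).length ↔ Odd (p w).length := by
    by_cases h1 : Odd (p u).length <;> by_cases h2 : Odd (p w).length <;>
      simp [h1, h2] at hf ⊢
  rw [← hlq] at hiff
  rcases Nat.even_or_odd (p u).length with he | ho
  · have h1 : ¬ Odd (p u).length := by simpa [Nat.not_odd_iff_even]
    have h2 : ¬ Odd q'.length := fun hx => h1 (hiff.mpr hx)
    rw [Nat.not_odd_iff_even] at h2
    obtain ⟨a, ha⟩ := he; obtain ⟨b, hb⟩ := h2; obtain ⟨c, hc⟩ := hW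
    omega
  · have h2 : Odd q'.length := hiff.mp ho
    obtain ⟨a, ha⟩ := ho; obtain ⟨b, hb⟩ := h2; obtain ⟨c, hc⟩ := hW
    omega

lemma aux_path_edge_endpoints {H : SimpleGraph V} :
    ∀ {a v : V} (p : H.Walk a v), p.support.Nodup → s(v, a) ∈ p.edges → p.length = 1 := by
  intro a v p
  induction p with
  | nil => simp
  | @cons a b v h p ih =>
    intro hnd he
    rw [Walk.edges_cons, List.mem_cons] at he
    rw [Walk.support_cons, List.nodup_cons] at hnd
    rcases he with he | he
    · have hne : v ≠ a := by
        rintro rfl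
        exact hnd.1 p.end_mem_support
      have hb : b = v := by
        rw [Sym2.eq_iff] at he
        rcases he with ⟨h1, h2⟩ | ⟨h1, h2⟩
        · exact absurd h1 hne
        · exact h1.symm
      subst hb
      cases p with
      | nil => simp
      | @cons _ c _ h' p' =>
        exfalso
        have hnd2 := hnd.2
        rw [Walk.support_cons, List.nodup_cons] at hnd2
        exact hnd2.1 p'.end_mem_support
    · exfalso
      exact hnd.1 (Walk.snd_mem_support_of_mem_edges p he)

lemma aux_exists_odd_cycle_aux {H : SimpleGraph V} [DecidableEq V] :
    ∀ (N : ℕ) {v : V} (w : H.Walk v v), w.length ≤ N → Odd w.length →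
      ∃ (u : V) (c : H.Walk u u), c.IsCycle ∧ Odd c.length := by
  intro N
  induction N with
  | zero =>
    intro v w hle hodd
    exfalso; obtain ⟨k, hk⟩ := hodd; omega
  | succ N ih =>
    intro v w hle hodd
    by_cases hnd : w.support.tail.Nodup
    · cases w with
      | nil => exfalso; obtain ⟨k, hk⟩ := hodd; simp at hk
      | @cons v x _ hadj p =>
        rw [Walk.support_cons] at hnd
        simp only [List.tail_cons] at hnd
        have hpath : p.IsPath := (Walk.isPath_def p).mpr hnd
        have hedge : s(v, x) ∉ p.edges := by
          intro hmem
          have h1 := aux_path_edge_endpoints p hnd hmem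
          rw [Walk.length_cons, h1] at hodd
          obtain ⟨k, hk⟩ := hodd; omega
        exact ⟨v, Walk.cons hadj p, (Walk.cons_isCycle_iff p hadj).mpr ⟨hpath, hedge⟩, hodd⟩
    · rw [List.nodup_iff_count_le_one] at hnd
      push_neg at hnd
      obtain ⟨y, hy2⟩ := hnd
      have hy : y ∈ w.support := by
        apply List.mem_of_mem_tail
        rw [← List.count_pos_iff]
        omega
      have hclen : (w.rotate y hy).length = w.length := by
        have hspec := w.take_spec hy
        have : (w.takeUntil y hy).length + (w.dropUntil y hy).length = w.length := by
          rw [← Walk.length_append, hspec]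
        simp only [Walk.rotate, Walk.length_append]
        omega
      have hcount : 2 ≤ (w.rotate y hy).support.tail.count y := by
        have hrot := w.support_rotate y hy
        rw [hrot.perm.count_eq]
        omega
      set c := w.rotate y hy with hc
      clear_value c
      clear hc
      cases c with
      | nil => simp at hcount
      | @cons y x _ hadj p =>
        rw [Walk.support_cons, List.tail_cons] at hcount
        have hyp : y ∈ p.support := by
          rw [← List.count_pos_iff]; omega
        have hsplit := p.take_spec hyp
        have hcnt1 : (p.takeUntil y hyp).support.count y = 1 :=
          p.count_support_takeUntil_eq_one hyp
        have hsupp : p.support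
            = (p.takeUntil y hyp).support ++ (p.dropUntil y hyp).support.tail := by
          conv_lhs => rw [← hsplit]
          rw [Walk.support_append]
        have hcntd : 1 ≤ (p.dropUntil y hyp).support.tail.count y := by
          rw [hsupp, List.count_append] at hcount
          omega
        have hdne : 0 < (p.dropUntil y hyp).length := by
          cases hd : p.dropUntil y hyp with
          | nil => rw [hd] at hcntd; simp at hcntd
          | cons h' p' => simp [Walk.length_cons]
        have hlsum : (p.takeUntil y hyp).length + (p.dropUntil y hyp).length = p.length := by
          rw [← Walk.length_append, hsplit]
        have hclen2 : (Walk.cons hadj p).length = p.length + 1 := Walk.length_cons _ _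
        rw [hclen2] at hclen
        have hparity : Odd (Walk.cons hadj (p.takeUntil y hyp)).length ∨
            Odd (p.dropUntil y hyp).length := by
          rw [Walk.length_cons]
          obtain ⟨k, hk⟩ := hodd
          rcases Nat.even_or_odd (p.dropUntil y hyp).length with he | ho
          · left; obtain ⟨b, hb⟩ := he
            exact ⟨k - b, by omega⟩
          · right; exact ho
        rcases hparity with ho | ho
        · exact ih (Walk.cons hadj (p.takeUntil y hyp)) (by rw [Walk.length_cons]; omega) ho
        · exact ih (p.dropUntil y hyp) (by omega) ho

lemma aux_exists_odd_cycle {H : SimpleGraph V} {v : V} {w : H.Walk v v}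
    (hodd : Odd w.length) :
    ∃ (u : V) (c : H.Walk u u), c.IsCycle ∧ Odd c.length := by
  classical
  exact aux_exists_odd_cycle_aux w.length w le_rfl hodd

lemma aux_exists_odd_cycle_of_oddDecodable [Nonempty V] {G : SimpleGraph V}
    (hdec : OddDecodable G) :
    ∃ (u : V) (c : G.Walk u u), c.IsCycle ∧ Odd c.length := by
  have h := hdec (G.connectedComponentMk (Classical.arbitrary V))
  obtain ⟨v, w, hodd⟩ := aux_exists_odd_closed_walk h
  exact aux_exists_odd_cycle (w := w.map (SimpleGraph.Embedding.induce _).toHom)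
    (by rwa [Walk.length_map])

/- ### Counting facts about cycles -/

lemma aux_sym2_card_le_two {e : Sym2 V} {s : Finset V} [DecidableEq V]
    (h : ∀ w ∈ s, w ∈ e) : s.card ≤ 2 := by
  induction e with
  | _ x y =>
    have hs : s ⊆ {x, y} := by
      intro w hw
      have := h w hw
      rw [Sym2.mem_iff] at this
      simp [this]
    calc s.card ≤ ({x, y} : Finset V).card := Finset.card_le_card hs
      _ ≤ 2 := Finset.card_insert_le _ _ |>.trans (by simp)

end Aux

set_option linter.unusedSectionVars false

section Cyc
variable {V : Type*} [Fintype V] {G : SimpleGraph V} [DecidableRel G.Adj] [DecidableEq V]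
  {u : V} {c : G.Walk u u}

lemma aux_cycle_edges_card (hc : c.IsCycle) : c.edges.toFinset.card = c.length := by
  rw [List.toFinset_card_of_nodup hc.edges_nodup, Walk.length_edges]

lemma aux_cycle_edges_subset : c.edges.toFinset ⊆ G.edgeFinset := by
  intro e he
  rw [List.mem_toFinset] at he
  rw [mem_edgeFinset]
  exact c.edges_subset_edgeSet he

lemma aux_cycle_length_le (hc : c.IsCycle) : c.length ≤ G.edgeFinset.card := by
  rw [← aux_cycle_edges_card hc]
  exact Finset.card_le_card aux_cycle_edges_subset

lemma aux_cycle_support_tail_card (hc : c.IsCycle) :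
    c.support.tail.toFinset.card = c.length := by
  rw [List.toFinset_card_of_nodup hc.support_nodup]
  have := c.length_support
  simp [List.length_tail, this]

lemma aux_cycle_mem_tail (hc : c.IsCycle) {x : V} (hx : x ∈ c.support) :
    x ∈ c.support.tail.toFinset := by
  cases c with
  | nil => exact absurd rfl hc.ne_nil
  | cons h p =>
    rw [Walk.support_cons] at hx ⊢
    rw [List.tail_cons, List.mem_toFinset]
    rcases List.mem_cons.mp hx with rfl | hx
    · exact p.end_mem_support
    · exact hx

lemma aux_cycle_edge_mem_tail {x : V} {e : Sym2 V} (hc : c.IsCycle) (he : e ∈ c.edges)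
    (hx : x ∈ e) : x ∈ c.support.tail.toFinset := by
  apply aux_cycle_mem_tail hc
  obtain ⟨y, rfl⟩ := Sym2.mem_iff_exists.mp hx
  exact c.fst_mem_support_of_mem_edges he

/-- Covering bound: `n + ℓ ≤ 2m` when every vertex has positive degree. -/
lemma aux_card_le_of_cycle (hc : c.IsCycle) (hdeg : ∀ v, 0 < G.degree v) :
    Fintype.card V + c.length ≤ 2 * G.edgeFinset.card := by
  classical
  set S := c.support.tail.toFinset with hS
  set R := G.edgeFinset \ c.edges.toFinset with hR
  have hadj : ∀ w : V, ∃ x, G.Adj w x := by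
    intro w
    have := hdeg w
    rw [← card_neighborFinset_eq_degree, Finset.card_pos] at this
    obtain ⟨x, hx⟩ := this
    exact ⟨x, (mem_neighborFinset _ _ _).mp hx⟩
  let g : V → Sym2 V := fun w => s(w, Classical.choose (hadj w))
  have hg_mem : ∀ w, w ∈ g w := fun w => Sym2.mem_mk_left _ _
  have hg_edge : ∀ w, g w ∈ G.edgeFinset := fun w =>
    mem_edgeFinset.mpr (G.mem_edgeSet.mpr (Classical.choose_spec (hadj w)))
  have hgR : ∀ w ∈ Finset.univ \ S, g w ∈ R := by
    intro w hw
    rw [Finset.mem_sdiff] at hw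
    rw [hR, Finset.mem_sdiff]
    refine ⟨hg_edge w, fun hmem => hw.2 ?_⟩
    exact aux_cycle_edge_mem_tail hc (List.mem_toFinset.mp hmem) (hg_mem w)
  have hcount : (Finset.univ \ S).card ≤ 2 * R.card := by
    rw [Finset.card_eq_sum_card_fiberwise hgR]
    calc ∑ e ∈ R, ((Finset.univ \ S).filter (fun w => g w = e)).card
        ≤ ∑ _e ∈ R, 2 := by
          apply Finset.sum_le_sum
          intro e _
          apply aux_sym2_card_le_two
          intro w hw
          rw [Finset.mem_filter] at hw
          exact hw.2 ▸ hg_mem w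
      _ = 2 * R.card := by rw [Finset.sum_const, smul_eq_mul, mul_comm]
  have hscard : S.card = c.length := aux_cycle_support_tail_card hc
  have hRcard : R.card = G.edgeFinset.card - c.length := by
    rw [hR, Finset.card_sdiff_of_subset aux_cycle_edges_subset, aux_cycle_edges_card hc]
  have hsdiff : (Finset.univ \ S).card = Fintype.card V - S.card := by
    rw [Finset.card_sdiff_of_subset (Finset.subset_univ S), Finset.card_univ]
  have hle := aux_cycle_length_le hc
  have hSle : S.card ≤ Fintype.card V :=
    (Finset.card_le_card (Finset.subset_univ S)).trans (le_of_eq Finset.card_univ)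
  omega

end Cyc

section Conn
variable {V : Type*}

lemma aux_exists_crossing_edge {G : SimpleGraph V} (hconn : G.Connected) {T : Set V}
    {a b : V} (ha : a ∈ T) (hb : b ∉ T) :
    ∃ u x, u ∈ T ∧ x ∉ T ∧ G.Adj u x := by
  obtain ⟨p⟩ := hconn.preconnected a b
  induction p with
  | nil => exact absurd ha hb
  | @cons a y b h q ih =>
    by_cases hy : y ∈ T
    · exact ih hy hb
    · exact ⟨a, y, ha, hy, h⟩

end Conn

section Arith

noncomputable def fB (m : ℕ) : ℝ := (m : ℝ) / 2 - (Real.sqrt (8 * m + 1) - 1) / 8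

lemma aux_sqrt_le_odd {m k : ℕ} (h : 8 * m + 1 ≤ (2 * k + 1) ^ 2) :
    Real.sqrt (8 * m + 1) ≤ 2 * k + 1 := by
  rw [show ((2:ℝ) * k + 1) = Real.sqrt ((2 * k + 1) ^ 2) by
    rw [Real.sqrt_sq (by positivity)]]
  apply Real.sqrt_le_sqrt
  have : ((8 * m + 1 : ℕ) : ℝ) ≤ (((2 * k + 1) ^ 2 : ℕ) : ℝ) := by exact_mod_cast h
  push_cast at this ⊢
  linarith

lemma aux_fB_mono {a b : ℕ} (h : a ≤ b) : fB a ≤ fB b := by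
  unfold fB
  have hA : Real.sqrt (8 * a + 1) ^ 2 = 8 * a + 1 := Real.sq_sqrt (by positivity)
  have hB : Real.sqrt (8 * b + 1) ^ 2 = 8 * b + 1 := Real.sq_sqrt (by positivity)
  have h1 : (1:ℝ) ≤ Real.sqrt (8 * a + 1) := by
    have h0 : (0:ℝ) ≤ (a:ℝ) := Nat.cast_nonneg a
    have := Real.sqrt_le_sqrt (show (1:ℝ) ≤ 8 * a + 1 by linarith)
    simpa using this
  have h2 : Real.sqrt (8 * a + 1) ≤ Real.sqrt (8 * b + 1) := by
    apply Real.sqrt_le_sqrt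
    have : (a:ℝ) ≤ (b:ℝ) := by exact_mod_cast h
    linarith
  have hab : (a:ℝ) ≤ (b:ℝ) := by exact_mod_cast h
  nlinarith [h2, h1, hA, hB]

lemma aux_fB_lower {m k : ℕ} (h : k * (k + 1) ≤ 2 * m) : ((k:ℝ) ^ 2) / 4 ≤ fB m := by
  obtain ⟨M, hMM⟩ : ∃ M, 2 * M = k * (k + 1) := ⟨k * (k + 1) / 2, by
    rcases Nat.even_or_odd k with ⟨t, rfl⟩ | ⟨t, rfl⟩ <;> ring_nf <;> omega⟩
  have step : fB M ≤ fB m := aux_fB_mono (by omega)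
  refine le_trans ?_ step
  unfold fB
  have hMr : (2:ℝ) * (M:ℝ) = (k:ℝ) * ((k:ℝ) + 1) := by exact_mod_cast hMM
  have hsq : (8 * (M:ℝ) + 1) = ((2 * (k:ℝ) + 1)) ^ 2 := by nlinarith
  rw [hsq, Real.sqrt_sq (by positivity)]
  nlinarith

lemma aux_one_le_fB {m : ℕ} (h : 3 ≤ m) : 1 ≤ fB m := by
  refine le_trans ?_ (aux_fB_mono h)
  unfold fB
  have : Real.sqrt (8 * (3:ℕ) + 1) ≤ 2 * (2:ℕ) + 1 := aux_sqrt_le_odd (by norm_num)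
  norm_num at this ⊢

lemma aux_fB_six : (9:ℝ) / 4 ≤ fB 6 := by
  unfold fB
  have : Real.sqrt (8 * (6:ℕ) + 1) ≤ 2 * (3:ℕ) + 1 := aux_sqrt_le_odd (by norm_num)
  norm_num at this ⊢

lemma aux_fB_eight : 3 ≤ fB 8 := by
  unfold fB
  have : Real.sqrt (8 * (8:ℕ) + 1) ≤ 2 * (4:ℕ) + 1 := aux_sqrt_le_odd (by norm_num)
  norm_num at this ⊢
  linarith

end Arith

section B
variable {V : Type*} [Fintype V] [Nonempty V] {G : SimpleGraph V} [DecidableRel G.Adj] [DecidableEq V]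

/-- Case B: a decodable graph with min degree ≥ 2 and at most 5 edges has `bCut ≤ 1`. -/
lemma bCut_le_one_small (hdec : OddDecodable G) (hdeg : ∀ v, 2 ≤ G.degree v)
    (hm : G.edgeFinset.card ≤ 5) : bCut G ≤ 1 := by
  obtain ⟨u, c, hc, hodd⟩ := aux_exists_odd_cycle_of_oddDecodable hdec
  have hl3 := hc.three_le_length
  have hlm := aux_cycle_length_le hc
  have hl35 : c.length = 3 ∨ c.length = 5 := by
    obtain ⟨t, ht⟩ := hodd; omega
  rcases hl35 with hlen | hlen
  · -- triangle case
    clear hodd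
    cases c with
    | nil => simp at hlen
    | @cons _ x _ h1 p1 =>
      cases p1 with
      | nil => simp at hlen
      | @cons _ y _ h2 p2 =>
        cases p2 with
        | nil => simp at hlen
        | @cons _ z _ h3 p3 =>
          cases p3 with
          | @cons _ t _ h4 p4 => simp [Walk.length_cons] at hlen
          | nil =>
            have hnd := hc.support_nodup
            simp [Walk.support_cons] at hnd
            obtain ⟨⟨hxy, hxu⟩, hyu⟩ := hnd
            -- triangle u x y : h1 : Adj u x, h2 : Adj x y, h3 : Adj y u
            set T : Finset V := {u, x, y} with hT
            have hTcard : T.card = 3 := by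
              rw [hT, Finset.card_insert_of_notMem, Finset.card_insert_of_notMem,
                Finset.card_singleton]
              · simpa using hxy
              · simp only [Finset.mem_insert, Finset.mem_singleton]
                push_neg
                constructor
                · intro h; exact hxu h.symm
                · intro h; exact hyu h.symm
            set TE : Finset (Sym2 V) := {s(u, x), s(x, y), s(y, u)} with hTE
            have hTEsub : TE ⊆ G.edgeFinset := by
              intro e he
              rw [hTE] at he
              simp only [Finset.mem_insert, Finset.mem_singleton] at he
              rcases he with rfl | rfl | rfl <;> rw [mem_edgeFinset] <;>
                [exact h1; exact h2; exact h3]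
            have hTEcard : TE.card = 3 := by
              rw [hTE]
              rw [Finset.card_insert_of_notMem, Finset.card_insert_of_notMem,
                Finset.card_singleton]
              · simp only [Finset.mem_singleton, Sym2.eq_iff]
                tauto
              · simp only [Finset.mem_insert, Finset.mem_singleton, Sym2.eq_iff]
                tauto
            have hTmem : ∀ e ∈ TE, ∀ v ∈ e, v ∈ T := by
              intro e he v hv
              rw [hTE] at he
              simp only [Finset.mem_insert, Finset.mem_singleton] at he
              rcases he with rfl | rfl | rfl <;> rw [Sym2.mem_iff] at hv <;>
                rcases hv with rfl | rfl <;> simp [hT]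
            have hTadj : ∀ p ∈ T, ∀ q ∈ T, p ≠ q → G.Adj p q := by
              intro p hp q hq hpq
              rw [hT] at hp hq
              simp only [Finset.mem_insert, Finset.mem_singleton] at hp hq
              rcases hp with rfl | rfl | rfl <;> rcases hq with rfl | rfl | rfl <;>
                first
                | exact absurd rfl hpq
                | exact h1 | exact h2 | exact h3
                | exact h1.symm | exact h2.symm | exact h3.symm
            have hTE_of : ∀ e ∈ G.edgeFinset, (∀ v ∈ e, v ∈ T) → e ∈ TE := by
              intro e
              induction e with
              | _ p q =>
                intro he hv
                have hpq : p ≠ q := G.ne_of_adj (G.mem_edgeSet.mp (mem_edgeFinset.mp he))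
                have hp := hv p (Sym2.mem_mk_left p q)
                have hq := hv q (Sym2.mem_mk_right p q)
                rw [hT] at hp hq
                simp only [Finset.mem_insert, Finset.mem_singleton] at hp hq
                rw [hTE]
                simp only [Finset.mem_insert, Finset.mem_singleton, Sym2.eq_iff]
                rcases hp with rfl | rfl | rfl <;> rcases hq with rfl | rfl | rfl <;> tauto
            set E' : Finset (Sym2 V) := G.edgeFinset \ TE with hE'
            have hE'card : E'.card ≤ 2 := by
              rw [hE', Finset.card_sdiff_of_subset hTEsub, hTEcard]
              omega
            have hincsub : ∀ w : V, w ∉ T → G.incidenceFinset w ⊆ E' := by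
              intro w hw e he
              rw [mem_incidenceFinset] at he
              rw [hE', Finset.mem_sdiff, mem_edgeFinset]
              exact ⟨he.1, fun hmem => hw (hTmem e hmem w he.2)⟩
            by_cases hE : E' = ∅
            · -- G is exactly the triangle
              have hEF : G.edgeFinset = TE := by
                apply Finset.Subset.antisymm _ hTEsub
                rw [← Finset.sdiff_eq_empty_iff_subset, ← hE']
                exact hE
              have hh := aux_bCut_le_of_cross (G := G) {s(x, y)}
                (by intro e he
                    simp only [Finset.coe_singleton, Set.mem_singleton_iff] at he
                    subst he; exact h2)
                (fun v => if v = u then 0 else 1) ?_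
              · simpa using hh
              · intro u' w' hadj hnD
                have he : s(u', w') ∈ TE := by rw [← hEF, mem_edgeFinset]; exact hadj
                rw [hTE] at he
                simp only [Finset.mem_insert, Finset.mem_singleton, Sym2.eq_iff] at he
                simp only [Finset.mem_singleton, Sym2.eq_iff] at hnD
                rcases he with (⟨rfl, rfl⟩ | ⟨rfl, rfl⟩) | h | (⟨rfl, rfl⟩ | ⟨rfl, rfl⟩)
                · simp [hxu]
                · simp [hxu]
                · exact absurd h hnD
                · simp [hyu]
                · simp [hyu]
            · -- there is a vertex outside the triangle
              obtain ⟨e₀, he₀⟩ := Finset.nonempty_of_ne_empty hE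
              obtain ⟨he₀E, he₀T⟩ := Finset.mem_sdiff.mp he₀
              have hout : ∃ w, w ∈ e₀ ∧ w ∉ T := by
                by_contra hcon
                push_neg at hcon
                exact he₀T (hTE_of e₀ he₀E hcon)
              obtain ⟨w, hwe, hwT⟩ := hout
              have hwinc := hincsub w hwT
              have hdegw := hdeg w
              rw [← card_incidenceFinset_eq_degree] at hdegw
              have hcardinc := Finset.card_le_card hwinc
              have hinceq : G.incidenceFinset w = E' :=
                Finset.eq_of_subset_of_card_le hwinc (by omega)
              have hnb : (G.neighborFinset w).card = 2 := by
                rw [card_neighborFinset_eq_degree, ← card_incidenceFinset_eq_degree]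
                omega
              obtain ⟨p, q, hpq, hpqset⟩ := Finset.card_eq_two.mp hnb
              have hwp : G.Adj w p := by
                rw [← mem_neighborFinset, hpqset]; simp
              have hwq : G.Adj w q := by
                rw [← mem_neighborFinset, hpqset]; simp
              have hE'sub : E' ⊆ {s(w, p), s(w, q)} := by
                intro e he
                rw [← hinceq, mem_incidenceFinset] at he
                obtain ⟨he1, hv⟩ := he
                obtain ⟨z, rfl⟩ := Sym2.mem_iff_exists.mp hv
                have hz : z ∈ G.neighborFinset w := by
                  rw [mem_neighborFinset]; exact G.mem_edgeSet.mp he1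
                rw [hpqset] at hz
                simp only [Finset.mem_insert, Finset.mem_singleton] at hz
                rcases hz with rfl | rfl <;> simp
              have hinT : ∀ p', G.Adj w p' → p' ∉ T → False := by
                intro p' hwp' hp'T
                have h2p := hdeg p'
                rw [← card_incidenceFinset_eq_degree] at h2p
                have hsub := (hincsub p' hp'T).trans hE'sub
                have hss : G.incidenceFinset p' ⊆ {s(w, p')} := by
                  intro e he
                  have hin := hsub he
                  rw [mem_incidenceFinset] at he
                  simp only [Finset.mem_insert, Finset.mem_singleton] at hin
                  simp only [Finset.mem_singleton]
                  have hp'w : p' ≠ w := fun h => G.irrefl (h ▸ hwp')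
                  rcases hin with rfl | rfl <;>
                  · have hmem := he.2
                    rw [Sym2.mem_iff] at hmem
                    rcases hmem with rfl | rfl
                    · exact absurd rfl hp'w
                    · rfl
                have hcard1 : (G.incidenceFinset p').card ≤ 1 := by
                  simpa using Finset.card_le_card hss
                omega
              have hpT : p ∈ T := by
                by_contra hpT; exact hinT p hwp hpT
              have hqT : q ∈ T := by
                by_contra hqT; exact hinT q hwq hqT
              have hqTP : q ∈ T.erase p := Finset.mem_erase.mpr ⟨hpq.symm, hqT⟩
              have hcard_er : ((T.erase p).erase q).card = 1 := by
                rw [Finset.card_erase_of_mem hqTP, Finset.card_erase_of_mem hpT, hTcard]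
              obtain ⟨r, hr⟩ := Finset.card_eq_one.mp hcard_er
              have hrmem : r ∈ (T.erase p).erase q := by rw [hr]; simp
              have hrq : r ≠ q := (Finset.mem_erase.mp hrmem).1
              have hrp : r ≠ p := (Finset.mem_erase.mp (Finset.mem_erase.mp hrmem).2).1
              have hrT : r ∈ T := (Finset.mem_erase.mp (Finset.mem_erase.mp hrmem).2).2
              have hcover : ∀ v ∈ T, v = p ∨ v = q ∨ v = r := by
                intro v hv
                by_cases h1' : v = p
                · exact Or.inl h1'
                by_cases h2' : v = q
                · exact Or.inr (Or.inl h2')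
                right; right
                have : v ∈ (T.erase p).erase q :=
                  Finset.mem_erase.mpr ⟨h2', Finset.mem_erase.mpr ⟨h1', hv⟩⟩
                rw [hr] at this
                simpa using this
              have hadjpq : G.Adj p q := hTadj p hpT q hqT hpq
              have hwnp : w ≠ p := fun h => hwT (h ▸ hpT)
              have hwnq : w ≠ q := fun h => hwT (h ▸ hqT)
              have hh := aux_bCut_le_of_cross (G := G) {s(p, q)}
                (by intro e he
                    simp only [Finset.coe_singleton, Set.mem_singleton_iff] at he
                    subst he; exact hadjpq)
                (fun v => if v = p ∨ v = q then 0 else 1) ?_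
              · simpa using hh
              · intro u' w' hadj hnD
                simp only [Finset.mem_singleton, Sym2.eq_iff] at hnD
                have hedge : s(u', w') ∈ G.edgeFinset := mem_edgeFinset.mpr hadj
                by_cases hTE' : s(u', w') ∈ TE
                · have hu'T := hTmem _ hTE' u' (Sym2.mem_mk_left _ _)
                  have hw'T := hTmem _ hTE' w' (Sym2.mem_mk_right _ _)
                  have hne := G.ne_of_adj hadj
                  rcases hcover u' hu'T with rfl | rfl | rfl <;>
                    rcases hcover w' hw'T with rfl | rfl | rfl <;>
                      simp_all [hrp, hrq]
                · have hE'm : s(u', w') ∈ E' := by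
                    rw [hE', Finset.mem_sdiff]; exact ⟨hedge, hTE'⟩
                  have := hE'sub hE'm
                  simp only [Finset.mem_insert, Finset.mem_singleton, Sym2.eq_iff] at this
                  rcases this with (⟨rfl, rfl⟩ | ⟨rfl, rfl⟩) | (⟨rfl, rfl⟩ | ⟨rfl, rfl⟩) <;>
                    simp_all
  · -- C5 case
    have hm5 : G.edgeFinset.card = 5 := by omega
    cases c with
    | nil => simp at hlen
    | @cons _ v1 _ h1 p1 =>
      cases p1 with
      | nil => simp at hlen
      | @cons _ v2 _ h2 p2 =>
        cases p2 with
        | nil => simp at hlen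
        | @cons _ v3 _ h3 p3 =>
          cases p3 with
          | nil => simp at hlen
          | @cons _ v4 _ h4 p4 =>
            cases p4 with
            | nil => simp at hlen
            | @cons _ v5 _ h5 p5 =>
              cases p5 with
              | @cons _ t _ h6 p6 => simp [Walk.length_cons] at hlen
              | nil =>
                -- cycle u v1 v2 v3 v4 (v5 = u forced)
                have hnd := hc.support_nodup
                simp [Walk.support_cons] at hnd
                obtain ⟨⟨h12, h13, h14, h1u⟩, ⟨h23, h24, h2u⟩, ⟨h34, h3u⟩, h4u⟩ := hnd
                have h12s : ¬ _ = _ := fun h => h12 h.symm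
                have h13s : ¬ _ = _ := fun h => h13 h.symm
                have h14s : ¬ _ = _ := fun h => h14 h.symm
                have h1us : ¬ _ = _ := fun h => h1u h.symm
                have h23s : ¬ _ = _ := fun h => h23 h.symm
                have h24s : ¬ _ = _ := fun h => h24 h.symm
                have h2us : ¬ _ = _ := fun h => h2u h.symm
                have h34s : ¬ _ = _ := fun h => h34 h.symm
                have h3us : ¬ _ = _ := fun h => h3u h.symm
                have h4us : ¬ _ = _ := fun h => h4u h.symm
                set c' : G.Walk u u :=
                  Walk.cons h1 (Walk.cons h2 (Walk.cons h3 (Walk.cons h4 (Walk.cons h5 Walk.nil))))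
                  with hc'
                set CE : Finset (Sym2 V) :=
                  {s(u, v1), s(v1, v2), s(v2, v3), s(v3, v4), s(v4, u)} with hCE
                have hedges : c'.edges.toFinset = CE := by
                  rw [hc']
                  simp [Walk.edges_cons, hCE]
                have hCEcard : CE.card = 5 := by
                  rw [← hedges, aux_cycle_edges_card hc]
                  rw [hlen]
                have hsubCE : CE ⊆ G.edgeFinset := by
                  rw [← hedges]; exact aux_cycle_edges_subset
                have hEF : G.edgeFinset = CE :=
                  (Finset.eq_of_subset_of_card_le hsubCE (by omega)).symm
                have hh := aux_bCut_le_of_cross (G := G) {s(v3, v4)}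
                  (by intro e he
                      simp only [Finset.coe_singleton, Set.mem_singleton_iff] at he
                      subst he; exact h4)
                  (fun v => if v = u ∨ v = v2 then 0 else 1) ?_
                · simpa using hh
                · intro u' w' hadj hnD
                  simp only [Finset.mem_singleton, Sym2.eq_iff] at hnD
                  have he : s(u', w') ∈ CE := by rw [← hEF, mem_edgeFinset]; exact hadj
                  rw [hCE] at he
                  simp only [Finset.mem_insert, Finset.mem_singleton, Sym2.eq_iff] at he
                  rcases he with (⟨rfl, rfl⟩ | ⟨rfl, rfl⟩) | (⟨rfl, rfl⟩ | ⟨rfl, rfl⟩) |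
                    (⟨rfl, rfl⟩ | ⟨rfl, rfl⟩) | h | (⟨rfl, rfl⟩ | ⟨rfl, rfl⟩) <;>
                    first
                    | (exact absurd h hnD)
                    | simp_all
end B

section K4
variable {V : Type*} [Fintype V] [Nonempty V] {G : SimpleGraph V} [DecidableRel G.Adj] [DecidableEq V]

/-- The K4 case: 4 vertices, all degrees 3. -/
lemma bCut_le_two_K4 (hn : Fintype.card V = 4) (hdeg : ∀ v, G.degree v = 3) :
    bCut G ≤ 2 := by
  -- every pair of distinct vertices is adjacent
  have hadj : ∀ u w : V, u ≠ w → G.Adj u w := by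
    intro u w hne
    have hsub : G.neighborFinset u ⊆ Finset.univ.erase u := by
      intro z hz
      rw [Finset.mem_erase]
      rw [mem_neighborFinset] at hz
      exact ⟨fun h => G.irrefl (h ▸ hz), Finset.mem_univ z⟩
    have hcard : (Finset.univ.erase u).card = 3 := by
      rw [Finset.card_erase_of_mem (Finset.mem_univ u), Finset.card_univ, hn]
    have heq : G.neighborFinset u = Finset.univ.erase u := by
      apply Finset.eq_of_subset_of_card_le hsub
      rw [hcard, card_neighborFinset_eq_degree, hdeg]
    have : w ∈ G.neighborFinset u := by
      rw [heq, Finset.mem_erase]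
      exact ⟨hne.symm, Finset.mem_univ w⟩
    rwa [mem_neighborFinset] at this
  -- get four distinct vertices
  obtain ⟨a, _⟩ := Finset.card_pos.mp (by rw [Finset.card_univ, hn]; norm_num :
    0 < (Finset.univ : Finset V).card)
  have h3 : 0 < (Finset.univ.erase a).card := by
    rw [Finset.card_erase_of_mem (Finset.mem_univ a), Finset.card_univ, hn]; norm_num
  obtain ⟨b, hb⟩ := Finset.card_pos.mp h3
  have h2 : 0 < ((Finset.univ.erase a).erase b).card := by
    rw [Finset.card_erase_of_mem hb, Finset.card_erase_of_mem (Finset.mem_univ a),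
      Finset.card_univ, hn]; norm_num
  obtain ⟨cc, hcc⟩ := Finset.card_pos.mp h2
  have h1 : 0 < (((Finset.univ.erase a).erase b).erase cc).card := by
    rw [Finset.card_erase_of_mem hcc, Finset.card_erase_of_mem hb,
      Finset.card_erase_of_mem (Finset.mem_univ a), Finset.card_univ, hn]; norm_num
  obtain ⟨d, hd⟩ := Finset.card_pos.mp h1
  have hba : b ≠ a := (Finset.mem_erase.mp hb).1
  have hcb : cc ≠ b := (Finset.mem_erase.mp hcc).1
  have hca : cc ≠ a := (Finset.mem_erase.mp (Finset.mem_erase.mp hcc).2).1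
  have hdc : d ≠ cc := (Finset.mem_erase.mp hd).1
  have hdb : d ≠ b := (Finset.mem_erase.mp (Finset.mem_erase.mp hd).2).1
  have hda : d ≠ a := (Finset.mem_erase.mp (Finset.mem_erase.mp (Finset.mem_erase.mp hd).2).2).1
  -- univ = {a, b, cc, d}
  have huniv : (Finset.univ : Finset V) = {a, b, cc, d} := by
    apply (Finset.eq_of_subset_of_card_le (Finset.subset_univ _) _).symm
    rw [Finset.card_univ, hn]
    rw [Finset.card_insert_of_notMem (by simp [hba.symm, hca.symm, hda.symm]),
      Finset.card_insert_of_notMem (by simp [hcb.symm, hdb.symm]),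
      Finset.card_insert_of_notMem (by simp [hdc.symm]), Finset.card_singleton]
  have hDcard : ({s(a, b), s(cc, d)} : Finset (Sym2 V)).card = 2 := by
    rw [Finset.card_insert_of_notMem, Finset.card_singleton]
    simp only [Finset.mem_singleton, Sym2.eq_iff]
    tauto
  have hh := aux_bCut_le_of_cross (G := G) {s(a, b), s(cc, d)}
    (by intro e he
        simp only [Finset.coe_insert, Finset.coe_singleton, Set.mem_insert_iff,
          Set.mem_singleton_iff] at he
        rcases he with rfl | rfl
        · exact hadj a b hba.symm
        · exact hadj cc d hdc.symm)
    (fun v => if v = a ∨ v = b then 0 else 1) ?_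
  · rw [hDcard] at hh; exact hh
  · intro u' w' hadjuw hnD
    have hne := G.ne_of_adj hadjuw
    simp only [Finset.mem_insert, Finset.mem_singleton, Sym2.eq_iff] at hnD
    push_neg at hnD
    have hu' : u' ∈ (Finset.univ : Finset V) := Finset.mem_univ u'
    have hw' : w' ∈ (Finset.univ : Finset V) := Finset.mem_univ w'
    rw [huniv] at hu' hw'
    simp only [Finset.mem_insert, Finset.mem_singleton] at hu' hw'
    obtain ⟨hnD1, hnD2⟩ := hnD
    rcases hu' with rfl | rfl | rfl | rfl <;> rcases hw' with rfl | rfl | rfl | rfl <;>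
      simp_all
end K4

section P26
variable {V : Type*} [Fintype V] [Nonempty V] {G : SimpleGraph V} [DecidableRel G.Adj] [DecidableEq V]

lemma no_graph_66 (hconn : G.Connected) (hdec : OddDecodable G)
    (hdeg : ∀ v, 2 ≤ G.degree v) (hn : Fintype.card V = 6)
    (hm : G.edgeFinset.card = 6) : False := by
  obtain ⟨u, c, hc, hodd⟩ := aux_exists_odd_cycle_of_oddDecodable hdec
  have hl3 := hc.three_le_length
  have hlm := aux_cycle_length_le hc
  rw [hm] at hlm
  have hl35 : c.length = 3 ∨ c.length = 5 := by obtain ⟨t, ht⟩ := hodd; omega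
  set S := c.support.tail.toFinset with hS
  have hScard : S.card = c.length := aux_cycle_support_tail_card hc
  set R := G.edgeFinset \ c.edges.toFinset with hR
  have hRcard : R.card = G.edgeFinset.card - c.length := by
    rw [hR, Finset.card_sdiff_of_subset aux_cycle_edges_subset, aux_cycle_edges_card hc]
  set Out := (Finset.univ : Finset V) \ S with hOut
  have hOutcard : Out.card = 6 - c.length := by
    rw [hOut, Finset.card_sdiff_of_subset (Finset.subset_univ S), Finset.card_univ, hn, hScard]
  have hinc : ∀ w ∈ Out, G.incidenceFinset w ⊆ R := by
    intro w hw e he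
    rw [mem_incidenceFinset] at he
    rw [hR, Finset.mem_sdiff, mem_edgeFinset]
    refine ⟨he.1, fun hmem => ?_⟩
    have := aux_cycle_edge_mem_tail hc (List.mem_toFinset.mp hmem) he.2
    rw [hOut, Finset.mem_sdiff] at hw
    exact hw.2 this
  rcases hl35 with hlen | hlen
  case inr =>
    -- C5 : single outside vertex with degree ≤ 1
    have h1 : 0 < Out.card := by omega
    obtain ⟨w, hw⟩ := Finset.card_pos.mp h1
    have h2 := hdeg w
    rw [← card_incidenceFinset_eq_degree] at h2
    have := Finset.card_le_card (hinc w hw)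
    omega
  case inl =>
    -- triangle case
    -- a crossing edge
    have hSne : 0 < S.card := by omega
    obtain ⟨a, ha⟩ := Finset.card_pos.mp hSne
    have hOutne : 0 < Out.card := by omega
    obtain ⟨b, hb⟩ := Finset.card_pos.mp hOutne
    have hbS : b ∉ S := by
      rw [hOut, Finset.mem_sdiff] at hb; exact hb.2
    obtain ⟨u0, x0, hu0, hx0, hadj0⟩ :=
      aux_exists_crossing_edge hconn (T := (↑S : Set V)) (Finset.mem_coe.mpr ha)
        (fun h => hbS (Finset.mem_coe.mp h))
    set e0 : Sym2 V := s(u0, x0) with he0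
    have he0R : e0 ∈ R := by
      rw [hR, Finset.mem_sdiff, mem_edgeFinset]
      refine ⟨hadj0, fun hmem => ?_⟩
      have := aux_cycle_edge_mem_tail hc (List.mem_toFinset.mp hmem) (Sym2.mem_mk_left u0 x0)
      exact hx0 ((Finset.mem_coe.mpr (by
        have h2 := aux_cycle_edge_mem_tail hc (List.mem_toFinset.mp hmem) (Sym2.mem_mk_right u0 x0)
        exact h2)))
    -- double counting
    have hfilter_eq : ∀ w ∈ Out, (G.incidenceFinset w).card
        = (R.filter (fun e => w ∈ e)).card := by
      intro w hw
      congr 1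
      apply Finset.Subset.antisymm
      · intro e he
        rw [Finset.mem_filter]
        have he' := he
        rw [mem_incidenceFinset] at he'
        exact ⟨hinc w hw he, he'.2⟩
      · intro e he
        rw [Finset.mem_filter] at he
        rw [mem_incidenceFinset]
        have := he.1
        rw [hR, Finset.mem_sdiff, mem_edgeFinset] at this
        exact ⟨this.1, he.2⟩
    have hswap : ∑ w ∈ Out, (R.filter (fun e => w ∈ e)).card
        = ∑ e ∈ R, (Out.filter (fun w => w ∈ e)).card := by
      simp only [Finset.card_filter]
      exact Finset.sum_comm
    have hub : ∀ e ∈ R, (Out.filter (fun w => w ∈ e)).card ≤ 2 := by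
      intro e _
      apply aux_sym2_card_le_two
      intro w hw
      exact (Finset.mem_filter.mp hw).2
    have hub0 : (Out.filter (fun w => w ∈ e0)).card ≤ 1 := by
      have hsub : Out.filter (fun w => w ∈ e0) ⊆ {x0} := by
        intro w hw
        rw [Finset.mem_filter] at hw
        rw [he0, Sym2.mem_iff] at hw
        rcases hw.2 with rfl | rfl
        · exfalso
          have := hw.1
          rw [hOut, Finset.mem_sdiff] at this
          exact this.2 (Finset.mem_coe.mp hu0)
        · exact Finset.mem_singleton_self _
      simpa using Finset.card_le_card hsub
    have hsum_ub : ∑ e ∈ R, (Out.filter (fun w => w ∈ e)).card ≤ 5 := by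
      rw [← Finset.insert_erase he0R, Finset.sum_insert (Finset.notMem_erase _ _)]
      have h2 : ∑ e ∈ R.erase e0, (Out.filter (fun w => w ∈ e)).card
          ≤ ∑ _e ∈ R.erase e0, 2 :=
        Finset.sum_le_sum (fun e he => hub e (Finset.mem_of_mem_erase he))
      have h3 : (R.erase e0).card = 2 := by
        rw [Finset.card_erase_of_mem he0R]; omega
      rw [Finset.sum_const, h3, smul_eq_mul] at h2
      omega
    have hsum_lb : 6 ≤ ∑ w ∈ Out, (R.filter (fun e => w ∈ e)).card := by
      calc (6 : ℕ) = ∑ _w ∈ Out, 2 := by rw [Finset.sum_const, hOutcard, hlen, smul_eq_mul]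
        _ ≤ ∑ w ∈ Out, (R.filter (fun e => w ∈ e)).card := by
            apply Finset.sum_le_sum
            intro w hw
            rw [← hfilter_eq w hw, card_incidenceFinset_eq_degree]
            exact hdeg w
    omega
end P26

/-- For a decodable (`q` odd sense) simple graph `G` on a finite
nonempty vertex set with `n` vertices and `m` edges:
(1) `b_G ≤ m/2 − (√(8m+1) − 1)/8`, and (2) if `G` is connected,
`b_G ≤ m/2 − (n−1)/4` (over the reals). -/
theorem bCut_real_upper_bounds {V : Type*} [Fintype V] [Nonempty V] (G : SimpleGraph V)
    (n m : ℕ) (hn : Fintype.card V = n) (hm : Nat.card G.edgeSet = m)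
    (hdec : OddDecodable G) :
    (bCut G : ℝ) ≤ (m : ℝ) / 2 - (Real.sqrt (8 * m + 1) - 1) / 8 ∧
      (G.Connected → (bCut G : ℝ) ≤ (m : ℝ) / 2 - ((n : ℝ) - 1) / 4) := by
  classical
  have hm' : G.edgeFinset.card = m := by
    rw [edgeFinset_card, ← Nat.card_eq_fintype_card]; exact hm
  obtain ⟨u0, c, hc, hodd⟩ := aux_exists_odd_cycle_of_oddDecodable hdec
  have hl3 := hc.three_le_length
  have hlm := aux_cycle_length_le hc
  rw [hm'] at hlm
  have hm3 : 3 ≤ m := by omega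
  have hdegpos : ∀ v, 0 < G.degree v := aux_pos_degree hdec
  obtain ⟨vmin, hvmin⟩ := G.exists_minimal_degree_vertex
  have hbd : bCut G ≤ G.minDegree := hvmin ▸ aux_bCut_le_degree G vmin
  have hdpos : 0 < G.minDegree := hvmin ▸ hdegpos vmin
  have hhs : n * G.minDegree ≤ 2 * m := by
    calc n * G.minDegree = ∑ _v : V, G.minDegree := by
          rw [Finset.sum_const, Finset.card_univ, hn, smul_eq_mul]
      _ ≤ ∑ v, G.degree v := Finset.sum_le_sum fun v _ => G.minDegree_le_degree v
      _ = 2 * G.edgeFinset.card := G.sum_degrees_eq_twice_card_edges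
      _ = 2 * m := by rw [hm']
  have hdn : G.minDegree + 1 ≤ n := by
    have h1 := G.degree_lt_card_verts vmin
    rw [hn] at h1
    omega
  constructor
  · -- part (1)
    show (bCut G : ℝ) ≤ fB m
    by_cases hA : (G.minDegree : ℝ) ≤ fB m
    · refine le_trans ?_ hA
      exact_mod_cast hbd
    · push_neg at hA
      have h1f := aux_one_le_fB hm3
      have hd2 : 2 ≤ G.minDegree := by
        by_contra h
        push_neg at h
        have : (G.minDegree : ℝ) ≤ 1 := by
          have h' : G.minDegree ≤ 1 := by omega
          exact_mod_cast h'
        linarith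
      have hdcase : G.minDegree = 2 ∨ G.minDegree = 3 ∨ 4 ≤ G.minDegree := by omega
      rcases hdcase with hd | hd | hd
      · have hm5 : m ≤ 5 := by
          by_contra h
          push_neg at h
          have hmono := aux_fB_mono (show 6 ≤ m by omega)
          have h6 := aux_fB_six
          rw [hd] at hA
          norm_num at hA
          linarith
        have hb1 : bCut G ≤ 1 :=
          bCut_le_one_small hdec (fun v => hd ▸ G.minDegree_le_degree v) (by omega)
        calc (bCut G : ℝ) ≤ 1 := by exact_mod_cast hb1
          _ ≤ fB m := h1f
      · have hm7 : m ≤ 7 := by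
          by_contra h
          push_neg at h
          have hmono := aux_fB_mono (show 8 ≤ m by omega)
          have h8 := aux_fB_eight
          rw [hd] at hA
          norm_num at hA
          linarith
        have hn4 : n = 4 := by
          rw [hd] at hhs hdn; omega
        have hdeg3 : ∀ v, G.degree v = 3 := by
          intro v
          have h1 := G.minDegree_le_degree v
          have h2 := G.degree_lt_card_verts v
          rw [hd] at h1
          rw [hn, hn4] at h2
          omega
        have hb2 : bCut G ≤ 2 := bCut_le_two_K4 (by rw [hn, hn4]) hdeg3
        have hm6 : m = 6 := by
          have hsum : ∑ v, G.degree v = 2 * m := by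
            rw [G.sum_degrees_eq_twice_card_edges, hm']
          have hsum2 : ∑ v, G.degree v = 12 := by
            rw [Finset.sum_congr rfl (fun v _ => hdeg3 v), Finset.sum_const,
              Finset.card_univ, hn, hn4, smul_eq_mul]
          omega
        have h2f : (2:ℝ) ≤ fB m := by
          rw [hm6]; linarith [aux_fB_six]
        calc (bCut G : ℝ) ≤ 2 := by exact_mod_cast hb2
          _ ≤ fB m := h2f
      · exfalso
        have hprod : G.minDegree * (G.minDegree + 1) ≤ 2 * m := by
          calc G.minDegree * (G.minDegree + 1) = (G.minDegree + 1) * G.minDegree := by ring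
            _ ≤ n * G.minDegree := Nat.mul_le_mul_right _ hdn
            _ ≤ 2 * m := hhs
        have hlow := aux_fB_lower (m := m) (k := G.minDegree) hprod
        have h4 : (4:ℝ) ≤ (G.minDegree:ℝ) := by exact_mod_cast hd
        nlinarith [hA, hlow, h4]
  · -- part (2)
    intro hconn
    by_cases hA : 4 * G.minDegree + n ≤ 2 * m + 1
    · have hc1 : (G.minDegree : ℝ) ≤ (m:ℝ)/2 - ((n:ℝ)-1)/4 := by
        have hcast : (4 * (G.minDegree:ℝ) + n) ≤ 2 * m + 1 := by exact_mod_cast hA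
        linarith
      refine le_trans ?_ hc1
      exact_mod_cast hbd
    · push_neg at hA
      have hdcase : G.minDegree = 1 ∨ G.minDegree = 2 ∨ G.minDegree = 3 ∨
          4 ≤ G.minDegree := by omega
      rcases hdcase with hd | hd | hd | hd
      · exfalso
        have hcov := aux_card_le_of_cycle hc hdegpos
        rw [hn, hm'] at hcov
        rw [hd] at hA
        omega
      · have hnm : n ≤ m := by rw [hd] at hhs; omega
        have hm6 : m ≤ 6 := by rw [hd] at hA; omega
        by_cases hm5 : m ≤ 5
        · have hb1 : bCut G ≤ 1 :=
            bCut_le_one_small hdec (fun v => hd ▸ G.minDegree_le_degree v) (by omega)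
          have hineq : (n:ℝ) + 3 ≤ 2 * m := by exact_mod_cast (by omega : n + 3 ≤ 2 * m)
          have : (1:ℝ) ≤ (m:ℝ)/2 - ((n:ℝ)-1)/4 := by linarith
          calc (bCut G : ℝ) ≤ 1 := by exact_mod_cast hb1
            _ ≤ _ := this
        · exfalso
          have hm6' : m = 6 := by omega
          have hn6 : n = 6 := by rw [hd] at hA; omega
          exact no_graph_66 hconn hdec (fun v => hd ▸ G.minDegree_le_degree v)
            (by rw [hn, hn6]) (by rw [hm', hm6'])
      · have hn5 : n ≤ 5 := by rw [hd] at hA hhs; omega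
        have hn4' : n = 4 ∨ n = 5 := by rw [hd] at hdn; omega
        rcases hn4' with hn4 | hn5'
        · have hdeg3 : ∀ v, G.degree v = 3 := by
            intro v
            have h1 := G.minDegree_le_degree v
            have h2 := G.degree_lt_card_verts v
            rw [hd] at h1
            rw [hn, hn4] at h2
            omega
          have hb2 : bCut G ≤ 2 := bCut_le_two_K4 (by rw [hn, hn4]) hdeg3
          have hm6 : m = 6 := by
            have hsum : ∑ v, G.degree v = 2 * m := by
              rw [G.sum_degrees_eq_twice_card_edges, hm']
            have hsum2 : ∑ v, G.degree v = 12 := by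
              rw [Finset.sum_congr rfl (fun v _ => hdeg3 v), Finset.sum_const,
                Finset.card_univ, hn, hn4, smul_eq_mul]
            omega
          have hineq : (n:ℝ) + 7 ≤ 2 * m := by
            exact_mod_cast (by omega : n + 7 ≤ 2 * m)
          have h2g : (2:ℝ) ≤ (m:ℝ)/2 - ((n:ℝ)-1)/4 := by linarith
          calc (bCut G : ℝ) ≤ 2 := by exact_mod_cast hb2
            _ ≤ _ := h2g
        · exfalso
          rw [hd] at hA hhs
          omega
      · exfalso
        have h4r : (4:ℝ) ≤ (G.minDegree:ℝ) := by exact_mod_cast hd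
        have hnr : (G.minDegree:ℝ) + 1 ≤ (n:ℝ) := by exact_mod_cast hdn
        have hhsr : (n:ℝ) * (G.minDegree:ℝ) ≤ 2 * m := by exact_mod_cast hhs
        have hAr : 2 * (m:ℝ) + 2 ≤ 4 * (G.minDegree:ℝ) + n := by
          exact_mod_cast (by omega : 2 * m + 2 ≤ 4 * G.minDegree + n)
        nlinarith [mul_nonneg (sub_nonneg.mpr hnr) (by linarith : (0:ℝ) ≤ (G.minDegree:ℝ) - 1)]
end

section
/- Let r ≥ 2 and n ≥ 4 be integers, and let f : Fin (rn) → Sym2 V be a multigraph on a finite vertex set V with |V| = n that is decodable (q odd sense) and whose minimum incidence degree δ_I equals 2r. Then u_{2r} ≥ n, i.e., there are at least n subsets of 2r edges whose deletion yields an undecodable sub-multigraph. -/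
/-- The underlying simple graph of the sub-multigraph of `f : ι → Sym2 V` on the
edge-index set `S`. -/
def mGraph {V ι : Type*} (f : ι → Sym2 V) (S : Set ι) : SimpleGraph V :=
  SimpleGraph.fromRel (fun a b => ∃ i ∈ S, f i = s(a, b))

/-- Decodability (over `GF(q)` with `q` odd): every connected component of the underlying
simple graph contains a vertex carrying a loop or contains an odd cycle (i.e. is not
2-colorable). -/
def DecodOdd {V ι : Type*} (f : ι → Sym2 V) (S : Set ι) : Prop :=
  ∀ c : (mGraph f S).ConnectedComponent,
    (∃ w ∈ c.supp, ∃ i ∈ S, f i = s(w, w)) ∨ ¬ ((mGraph f S).induce c.supp).Colorable 2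

/-- `uCountOdd f x` is the number of `x`-element subsets `D` of the edge-index set whose
deletion leaves an undecodable (`q` odd sense) sub-multigraph. -/
noncomputable def uCountOdd {V ι : Type*} [Fintype ι] (f : ι → Sym2 V) (x : ℕ) : ℕ :=
  Nat.card {D : Finset ι // D.card = x ∧ ¬ DecodOdd f ((↑D : Set ι)ᶜ)}

/-- The incidence degree of a vertex `v`: the number of edge indices `i` with `v ∈ f i`
(a loop at `v` contributes one). -/
noncomputable def incDeg {V ι : Type*} (f : ι → Sym2 V) (v : V) : ℕ :=
  Nat.card {i : ι // v ∈ f i}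

lemma supp_subset_of_closed {V : Type*} {G : SimpleGraph V} {S : Set V} {v : V}
    (hv : v ∈ S) (hS : ∀ x ∈ S, ∀ y, G.Adj x y → y ∈ S) :
    (G.connectedComponentMk v).supp ⊆ S := by
  have key : ∀ {a b : V} (p : G.Walk a b), a ∈ S → b ∈ S := by
    intro a b p
    induction p with
    | nil => exact id
    | cons h _ ih => intro ha; exact ih (hS _ ha _ h)
  intro w hw
  rw [SimpleGraph.ConnectedComponent.mem_supp_iff, SimpleGraph.ConnectedComponent.eq] at hw
  obtain ⟨p⟩ := hw.symm
  exact key p hv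

lemma sym2_exists_rep {V : Type*} (z : Sym2 V) : ∃ a b, z = s(a, b) := by
  induction z using Sym2.ind with
  | _ a b => exact ⟨a, b, rfl⟩

/-- Let `r ≥ 2` and `n ≥ 4`, and let `f` be a decodable (`q` odd sense)
multigraph with `rn` edges on `n` vertices whose minimum incidence degree equals `2r`.
Then `u_{2r} ≥ n`: at least `n` subsets of `2r` edges have undecodable complement. -/
theorem uCountOdd_two_r_lower_bound {V : Type*} [Fintype V] {r n : ℕ}
    (hr : 2 ≤ r) (hn : 4 ≤ n) (hV : Fintype.card V = n)
    (f : Fin (r * n) → Sym2 V) (hdec : DecodOdd f Set.univ)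
    (hδ : (⨅ v : V, incDeg f v) = 2 * r) :
    n ≤ uCountOdd f (2 * r) := by
  classical
  have hne : Nonempty V := Fintype.card_pos_iff.mp (by omega)
  set D : V → Finset (Fin (r * n)) := fun v => Finset.univ.filter (fun i => v ∈ f i) with hD
  have hdeg : ∀ v, incDeg f v = (D v).card := by
    intro v
    rw [incDeg, Nat.card_eq_fintype_card, Fintype.card_subtype]
  have hlow : ∀ v, 2 * r ≤ (D v).card := by
    intro v
    rw [← hdeg, ← hδ]
    exact ciInf_le (OrderBot.bddBelow _) v
  set M : Fin (r * n) → ℕ := fun i => (Finset.univ.filter (fun v => v ∈ f i)).card with hM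
  have hm2 : ∀ i, M i ≤ 2 := by
    intro i
    obtain ⟨a, b, hab⟩ := sym2_exists_rep (f i)
    have hsub : Finset.univ.filter (fun v => v ∈ f i) ⊆ {a, b} := by
      intro x hx
      rw [Finset.mem_filter, hab, Sym2.mem_iff] at hx
      rcases hx.2 with h | h <;> simp [h]
    calc M i ≤ ({a, b} : Finset V).card := Finset.card_le_card hsub
      _ ≤ 2 := Finset.card_insert_le a {b} |>.trans (by simp)
  have hsum : ∑ v, (D v).card = ∑ i, M i := by
    simp only [hD, hM, Finset.card_filter]
    rw [Finset.sum_comm]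
  have htot : ∑ i, M i ≤ 2 * (r * n) := by
    calc ∑ i, M i ≤ ∑ _i : Fin (r * n), 2 := Finset.sum_le_sum (fun i _ => hm2 i)
      _ = 2 * (r * n) := by simp [mul_comm]
  have hconstV : ∑ _v : V, 2 * r = n * (2 * r) := by
    rw [Finset.sum_const, Finset.card_univ, hV, smul_eq_mul]
  have hconstE : ∑ _i : Fin (r * n), (2 : ℕ) = 2 * (r * n) := by
    simp [mul_comm]
  have hrn : n * (2 * r) = 2 * (r * n) := by ring
  have hlowsum : n * (2 * r) ≤ ∑ v, (D v).card := by
    rw [← hconstV]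
    exact Finset.sum_le_sum (fun v _ => hlow v)
  have hsum_eq : ∑ v, (D v).card = n * (2 * r) :=
    le_antisymm (by rw [hsum]; exact htot.trans_eq hrn.symm) hlowsum
  have hMsum_eq : ∑ i, M i = 2 * (r * n) := by rw [← hsum, hsum_eq, hrn]
  have hdv : ∀ v, (D v).card = 2 * r := by
    intro v
    by_contra hne'
    have hlt : 2 * r < (D v).card := lt_of_le_of_ne (hlow v) (Ne.symm hne')
    have h2 : ∑ _v : V, 2 * r < ∑ v, (D v).card :=
      Finset.sum_lt_sum (fun w _ => hlow w) ⟨v, Finset.mem_univ v, hlt⟩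
    rw [hconstV] at h2
    exact lt_irrefl _ (lt_of_lt_of_le h2 hsum_eq.le)
  have hmi : ∀ i, M i = 2 := by
    intro i
    by_contra hne'
    have hlt : M i < 2 := lt_of_le_of_ne (hm2 i) hne'
    have h2 : ∑ i, M i < ∑ _i : Fin (r * n), 2 :=
      Finset.sum_lt_sum (fun j _ => hm2 j) ⟨i, Finset.mem_univ i, hlt⟩
    rw [hconstE] at h2
    exact lt_irrefl _ (lt_of_lt_of_le h2 hMsum_eq.ge)
  have hedge : ∀ i, ∃ a b, a ≠ b ∧ f i = s(a, b) := by
    intro i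
    obtain ⟨a, b, hab⟩ := sym2_exists_rep (f i)
    refine ⟨a, b, ?_, hab⟩
    rintro rfl
    have hsub : Finset.univ.filter (fun v => v ∈ f i) ⊆ {a} := by
      intro x hx
      rw [Finset.mem_filter, hab, Sym2.mem_iff] at hx
      rcases hx.2 with h | h <;> simp [h]
    have h1 : M i ≤ 1 := (Finset.card_le_card hsub).trans (by simp)
    have := hmi i
    omega
  have hnoloop : ∀ (i) (w : V), f i ≠ s(w, w) := by
    intro i w hiw
    obtain ⟨a, b, hab, hfi⟩ := hedge i
    rw [hiw, Sym2.eq_iff] at hfi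
    rcases hfi with ⟨h1, h2⟩ | ⟨h1, h2⟩
    · exact hab (h1.symm.trans h2)
    · exact hab (h2.symm.trans h1)
  have hmemD : ∀ v i, i ∈ D v ↔ v ∈ f i := by
    intro v i; simp [hD]
  have hundec : ∀ v, ¬ DecodOdd f ((↑(D v) : Set (Fin (r * n)))ᶜ) := by
    intro v hcontra
    set S : Set (Fin (r * n)) := (↑(D v))ᶜ with hS
    have hiso : ∀ a, ¬ (mGraph f S).Adj v a := by
      intro a ha
      rw [mGraph, SimpleGraph.fromRel_adj] at ha
      obtain ⟨hvne, h | h⟩ := ha <;> obtain ⟨i, hiS, hfi⟩ := h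
      · exact hiS ((hmemD v i).mpr (by rw [hfi]; exact Sym2.mem_mk_left v a))
      · exact hiS ((hmemD v i).mpr (by rw [hfi]; exact Sym2.mem_mk_right a v))
    have hsupp : ((mGraph f S).connectedComponentMk v).supp ⊆ {v} := by
      refine supp_subset_of_closed rfl ?_
      intro x hx y hxy
      rw [Set.mem_singleton_iff] at hx
      subst hx
      exact absurd hxy (hiso y)
    rcases hcontra ((mGraph f S).connectedComponentMk v) with ⟨w, _, i, _, hfi⟩ | hcol
    · exact hnoloop i w hfi
    · refine hcol ⟨SimpleGraph.Coloring.mk (fun _ => 0) ?_⟩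
      intro x y hxy
      exfalso
      have hadj : (mGraph f S).Adj (x : V) (y : V) := hxy
      have hx : (x : V) = v := hsupp x.2
      have hy : (y : V) = v := hsupp y.2
      rw [hx, hy] at hadj
      exact (mGraph f S).irrefl hadj
  have hDinj : Function.Injective D := by
    intro u v hDuv
    by_contra huv
    have hvu : v ≠ u := fun h => huv h.symm
    have hall : ∀ i ∈ D v, f i = s(u, v) := by
      intro i hi
      have hvi : v ∈ f i := (hmemD v i).mp hi
      have hui : u ∈ f i := (hmemD u i).mp (hDuv ▸ hi)
      exact ((Sym2.mem_and_mem_iff huv).mp ⟨hui, hvi⟩)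
    have hadjv : ∀ y, (mGraph f Set.univ).Adj v y → y = u := by
      intro y hy
      rw [mGraph, SimpleGraph.fromRel_adj] at hy
      obtain ⟨hvy, h | h⟩ := hy <;> obtain ⟨i, -, hfi⟩ := h
      · have hi : i ∈ D v := (hmemD v i).mpr (by rw [hfi]; exact Sym2.mem_mk_left v y)
        have heq : s(u, v) = s(v, y) := (hall i hi).symm.trans hfi
        rw [Sym2.eq_iff] at heq
        rcases heq with ⟨h1, h2⟩ | ⟨h1, h2⟩
        · exact absurd h1 huv
        · exact h1.symm
      · have hi : i ∈ D v := (hmemD v i).mpr (by rw [hfi]; exact Sym2.mem_mk_right y v)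
        have heq : s(u, v) = s(y, v) := (hall i hi).symm.trans hfi
        rw [Sym2.eq_iff] at heq
        rcases heq with ⟨h1, h2⟩ | ⟨h1, h2⟩
        · exact h1.symm
        · exact absurd h1 huv
    have hadju : ∀ y, (mGraph f Set.univ).Adj u y → y = v := by
      intro y hy
      rw [mGraph, SimpleGraph.fromRel_adj] at hy
      obtain ⟨huy, h | h⟩ := hy <;> obtain ⟨i, -, hfi⟩ := h
      · have hi : i ∈ D v := by
          rw [← hDuv, hmemD]; rw [hfi]; exact Sym2.mem_mk_left u y
        have heq : s(u, v) = s(u, y) := (hall i hi).symm.trans hfi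
        rw [Sym2.eq_iff] at heq
        rcases heq with ⟨h1, h2⟩ | ⟨h1, h2⟩
        · exact h2.symm
        · exact absurd h2.symm huv
      · have hi : i ∈ D v := by
          rw [← hDuv, hmemD]; rw [hfi]; exact Sym2.mem_mk_right y u
        have heq : s(u, v) = s(y, u) := (hall i hi).symm.trans hfi
        rw [Sym2.eq_iff] at heq
        rcases heq with ⟨h1, h2⟩ | ⟨h1, h2⟩
        · exact absurd h2.symm huv
        · exact h2.symm
    have hsupp : ((mGraph f Set.univ).connectedComponentMk v).supp ⊆ {u, v} := by
      refine supp_subset_of_closed (by simp) ?_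
      intro x hx y hxy
      rcases hx with hx | hx
      · rw [hx] at hxy; right; exact hadju y hxy
      · rw [Set.mem_singleton_iff] at hx; rw [hx] at hxy; left; exact hadjv y hxy
    rcases hdec ((mGraph f Set.univ).connectedComponentMk v) with ⟨w, _, i, _, hfi⟩ | hcol
    · exact hnoloop i w hfi
    · refine hcol ⟨SimpleGraph.Coloring.mk
        (fun x => if (x : V) = u then (0 : Fin 2) else 1) ?_⟩
      intro x y hxy
      have hadj : (mGraph f Set.univ).Adj (x : V) (y : V) := hxy
      have hne' : (x : V) ≠ (y : V) := hadj.ne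
      have hx := hsupp x.2
      have hy := hsupp y.2
      simp only [Set.mem_insert_iff, Set.mem_singleton_iff] at hx hy
      show (if (x : V) = u then (0 : Fin 2) else 1) ≠ (if (y : V) = u then (0 : Fin 2) else 1)
      rcases hx with hx | hx <;> rcases hy with hy | hy
      · exact absurd (hx.trans hy.symm) hne'
      · rw [hx, hy]; simp [hvu]
      · rw [hx, hy]; simp [hvu]
      · exact absurd (hx.trans hy.symm) hne'
  set g : V → {D' : Finset (Fin (r * n)) // D'.card = 2 * r ∧
      ¬ DecodOdd f ((↑D' : Set (Fin (r * n)))ᶜ)} := fun v => ⟨D v, hdv v, hundec v⟩ with hg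
  have hginj : Function.Injective g := by
    intro a b hab
    exact hDinj (congrArg Subtype.val hab)
  have hcard := Nat.card_le_card_of_injective g hginj
  rwa [Nat.card_eq_fintype_card, hV] at hcard
end
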